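/- arXiv:2509.04612 — 11 statements merged into one kernel-verified Lean document; each statement's English description precedes it below -/
import Mathlib

section
/- Let γ: ℝ → ℝ be a continuous T-periodic function and let φ be a T-periodic solution of x' = x² + γ(t) with ∫₀ᵀ φ(t) dt = 0. Then φ is the unique T-periodic solution of x' = x² + γ(t): any T-periodic solution ψ of this equation satisfies ψ = φ. -/
theorem stmt_2 (T : ℝ) (hT : 0 < T) (γ : ℝ → ℝ) (hγc : Continuous γ)
    (hγp : Function.Periodic γ T)
    (φ : ℝ → ℝ) (hφd : ∀ t, HasDerivAt φ (φ t ^ 2 + γ t) t)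
    (hφp : Function.Periodic φ T)
    (hφ0 : (∫ t in (0:ℝ)..T, φ t) = 0)
    (ψ : ℝ → ℝ) (hψd : ∀ t, HasDerivAt ψ (ψ t ^ 2 + γ t) t)
    (hψp : Function.Periodic ψ T) :
    ψ = φ := by
  by_contra hne
  rw [show (¬ψ = φ) ↔ ψ ≠ φ from Iff.rfl, Function.ne_iff] at hne
  obtain ⟨t₀, ht₀⟩ := hne
  have hφc : Continuous φ := continuous_iff_continuousAt.2 fun t => (hφd t).continuousAt
  have hψc : Continuous ψ := continuous_iff_continuousAt.2 fun t => (hψd t).continuousAt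
  set u : ℝ → ℝ := fun t => ψ t - φ t with hu_def
  set g : ℝ → ℝ := fun t => ψ t + φ t with hg_def
  have hgc : Continuous g := hψc.add hφc
  have hu : ∀ t, HasDerivAt u (g t * u t) t := by
    intro t
    have := (hψd t).sub (hφd t)
    refine this.congr_deriv ?_
    simp only [hg_def, hu_def]
    ring
  -- G t = ∫_{t₀}^t g
  set G : ℝ → ℝ := fun t => ∫ s in t₀..t, g s with hG_def
  have hG : ∀ t, HasDerivAt G (g t) t := fun t =>
    intervalIntegral.integral_hasDerivAt_right (hgc.intervalIntegrable _ _)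
      (hgc.stronglyMeasurableAtFilter _ _) hgc.continuousAt
  -- w = u * exp(-G) is constant
  have hw : ∀ t, u t * Real.exp (-(G t)) = u t₀ * Real.exp (-(G t₀)) := by
    intro t
    have hd : ∀ s, HasDerivAt (fun r => u r * Real.exp (-(G r))) 0 s := by
      intro s
      have h1 := (hu s).mul ((hG s).neg.exp)
      refine h1.congr_deriv ?_
      ring
    exact is_const_of_deriv_eq_zero (fun s => (hd s).differentiableAt)
      (fun s => (hd s).deriv) t t₀
  have hu0 : ∀ t, u t ≠ 0 := by
    intro t ht
    have := hw t
    rw [ht, zero_mul] at this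
    have h0 : u t₀ ≠ 0 := sub_ne_zero.2 ht₀
    exact (mul_ne_zero h0 (Real.exp_ne_zero _)) this.symm
  -- v = 1/u
  set v : ℝ → ℝ := fun t => (u t)⁻¹ with hv_def
  have hv : ∀ t, HasDerivAt v (-2 * φ t * v t - 1) t := by
    intro t
    have h1 := (hu t).inv (hu0 t)
    have hne' : ψ t - φ t ≠ 0 := hu0 t
    refine h1.congr_deriv ?_
    simp only [hv_def, hg_def, hu_def]
    field_simp
    ring
  -- F t = ∫_0^t 2φ, μ = exp F
  set F : ℝ → ℝ := fun t => ∫ s in (0:ℝ)..t, 2 * φ s with hF_def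
  have h2φc : Continuous (fun s => 2 * φ s) := continuous_const.mul hφc
  have hF : ∀ t, HasDerivAt F (2 * φ t) t := fun t =>
    intervalIntegral.integral_hasDerivAt_right (h2φc.intervalIntegrable _ _)
      (h2φc.stronglyMeasurableAtFilter _ _) h2φc.continuousAt
  set μ : ℝ → ℝ := fun t => Real.exp (F t) with hμ_def
  have hμ : ∀ t, HasDerivAt μ (2 * φ t * μ t) t := by
    intro t
    have := (hF t).exp
    convert this using 1
    ring
  have hμc : Continuous μ :=
    Real.continuous_exp.comp (continuous_iff_continuousAt.2 fun t => (hF t).continuousAt)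
  have hμpos : ∀ t, 0 < μ t := fun t => Real.exp_pos _
  -- W = μ * v has derivative -μ
  have hW : ∀ t, HasDerivAt (fun r => μ r * v r) (-(μ t)) t := by
    intro t
    have h1 := (hμ t).mul (hv t)
    refine h1.congr_deriv ?_
    ring
  have hint : (∫ t in (0:ℝ)..T, -(μ t)) = μ T * v T - μ 0 * v 0 := by
    apply intervalIntegral.integral_eq_sub_of_hasDerivAt
    · intro t _
      exact hW t
    · exact (hμc.neg).intervalIntegrable _ _
  -- μ T = 1, μ 0 = 1
  have hFT : F T = 0 := by
    simp only [hF_def]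
    rw [intervalIntegral.integral_const_mul, hφ0, mul_zero]
  have hμT : μ T = 1 := by simp [hμ_def, hFT]
  have hμ0 : μ 0 = 1 := by simp [hμ_def, hF_def]
  -- v T = v 0 since u is T-periodic
  have huT : u T = u 0 := by
    have h1 : ψ T = ψ 0 := by have := hψp 0; simpa using this
    have h2 : φ T = φ 0 := by have := hφp 0; simpa using this
    simp [hu_def, h1, h2]
  have hvT : v T = v 0 := by simp [hv_def, huT]
  rw [hμT, hμ0, hvT, one_mul, sub_self] at hint
  -- but ∫ -(μ) < 0
  have hneg : (∫ t in (0:ℝ)..T, -(μ t)) < 0 := by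
    rw [intervalIntegral.integral_neg, neg_lt_zero]
    exact intervalIntegral.intervalIntegral_pos_of_pos_on (hμc.intervalIntegrable _ _)
      (fun t _ => hμpos t) hT
  rw [hint] at hneg
  exact lt_irrefl 0 hneg
end

section
/- Let γ: ℝ → ℝ be a continuous T-periodic function. If φ and ψ are two distinct T-periodic solutions of x' = x² + γ(t), then both have nonzero average: ∫₀ᵀ φ(t) dt ≠ 0 and ∫₀ᵀ ψ(t) dt ≠ 0. Conversely, if the equation has a T-periodic solution with nonzero average, then it has exactly two distinct T-periodic solutions. -/
open MeasureTheory Set intervalIntegral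

/-! Auxiliary definitions: the primitive `Phi` of `φ`, the integrating factor `ee = exp(2Φ)`,
and its primitive `gg`. -/

noncomputable def Phi (φ : ℝ → ℝ) (t : ℝ) : ℝ := ∫ s in (0:ℝ)..t, φ s
noncomputable def ee (φ : ℝ → ℝ) (t : ℝ) : ℝ := Real.exp (2 * Phi φ t)
noncomputable def gg (φ : ℝ → ℝ) (t : ℝ) : ℝ := ∫ s in (0:ℝ)..t, ee φ s

lemma hasDerivAt_primitive {f : ℝ → ℝ} (hf : Continuous f) (t : ℝ) :
    HasDerivAt (fun u => ∫ s in (0:ℝ)..u, f s) (f t) t :=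
  integral_hasDerivAt_right (hf.intervalIntegrable 0 t)
    (hf.stronglyMeasurableAtFilter _ _) hf.continuousAt

variable {φ : ℝ → ℝ} {T : ℝ}

lemma hasDerivAt_Phi (hφ : Continuous φ) (t : ℝ) : HasDerivAt (Phi φ) (φ t) t :=
  hasDerivAt_primitive hφ t

lemma continuous_Phi (hφ : Continuous φ) : Continuous (Phi φ) :=
  continuous_iff_continuousAt.mpr fun t => (hasDerivAt_Phi hφ t).continuousAt

lemma continuous_ee (hφ : Continuous φ) : Continuous (ee φ) :=
  Real.continuous_exp.comp (continuous_const.mul (continuous_Phi hφ))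

lemma hasDerivAt_ee (hφ : Continuous φ) (t : ℝ) :
    HasDerivAt (ee φ) (2 * φ t * ee φ t) t := by
  have h : HasDerivAt (ee φ) _ t := (((hasDerivAt_Phi hφ t).const_mul 2)).exp
  convert h using 1
  unfold ee
  ring

lemma hasDerivAt_gg (hφ : Continuous φ) (t : ℝ) : HasDerivAt (gg φ) (ee φ t) t :=
  hasDerivAt_primitive (continuous_ee hφ) t

lemma Phi_zero : Phi φ 0 = 0 := intervalIntegral.integral_same

lemma ee_zero : ee φ 0 = 1 := by simp [ee, Phi_zero]

lemma ee_pos (t : ℝ) : 0 < ee φ t := Real.exp_pos _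

lemma gg_zero : gg φ 0 = 0 := intervalIntegral.integral_same

lemma Phi_add (hφ : Continuous φ) (hφp : Function.Periodic φ T) (t : ℝ) :
    Phi φ (t + T) = Phi φ t + Phi φ T := by
  unfold Phi
  rw [← integral_add_adjacent_intervals (hφ.intervalIntegrable 0 t)
      (hφ.intervalIntegrable t (t + T)), hφp.intervalIntegral_add_eq t 0, zero_add]

lemma ee_add (hφ : Continuous φ) (hφp : Function.Periodic φ T) (t : ℝ) :
    ee φ (t + T) = ee φ T * ee φ t := by
  unfold ee
  rw [Phi_add hφ hφp, mul_add, Real.exp_add, mul_comm]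

lemma gg_T_pos (hT : 0 < T) (hφ : Continuous φ) : 0 < gg φ T :=
  intervalIntegral_pos_of_pos ((continuous_ee hφ).intervalIntegrable 0 T)
    (fun _ => ee_pos _) hT

lemma gg_add (hφ : Continuous φ) (hφp : Function.Periodic φ T) (t : ℝ) :
    gg φ (t + T) = gg φ T + ee φ T * gg φ t := by
  unfold gg
  rw [← integral_add_adjacent_intervals ((continuous_ee hφ).intervalIntegrable 0 T)
      ((continuous_ee hφ).intervalIntegrable T (t + T))]
  congr 1
  have h3 : ∫ s in (0:ℝ)..t, ee φ (s + T) = ∫ s in T..(t + T), ee φ s := by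
    simpa using intervalIntegral.integral_comp_add_right (a := (0:ℝ)) (b := t) (ee φ) T
  rw [← h3]
  simp_rw [ee_add hφ hφp]
  rw [intervalIntegral.integral_const_mul]

/-- Representation of solutions of the linear ODE `w' = -2 φ w - 1`. -/
lemma rep {w : ℝ → ℝ} (hφc : Continuous φ)
    (hw : ∀ t, HasDerivAt w (-2 * φ t * w t - 1) t) (t : ℝ) :
    ee φ t * w t = w 0 - gg φ t := by
  have key : ∀ u, HasDerivAt (fun s => ee φ s * w s + gg φ s) 0 u := by
    intro u
    have h : HasDerivAt (fun s => ee φ s * w s + gg φ s) _ u :=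
      ((hasDerivAt_ee hφc u).mul (hw u)).add (hasDerivAt_gg hφc u)
    convert h using 1
    ring
  have hdiff : Differentiable ℝ (fun s => ee φ s * w s + gg φ s) :=
    fun u => (key u).differentiableAt
  have hconst := is_const_of_deriv_eq_zero hdiff (fun u => (key u).deriv) t 0
  simp only [ee_zero, gg_zero, one_mul, add_zero] at hconst
  linarith [hconst]

/-- Boundedness of a continuous periodic function. -/
lemma periodic_bounded (hT : 0 < T) {f : ℝ → ℝ} (hf : Continuous f)
    (hp : Function.Periodic f T) : ∃ M, ∀ t, |f t| ≤ M := by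
  obtain ⟨C, hC⟩ := (isCompact_Icc (a := (0:ℝ)) (b := T)).exists_bound_of_continuousOn
    hf.continuousOn
  refine ⟨C, fun t => ?_⟩
  have h1 : f (t - ⌊t / T⌋ * T) = f t := hp.sub_int_mul_eq ⌊t / T⌋
  have h2 : t - ⌊t / T⌋ * T ∈ Icc (0:ℝ) T :=
    ⟨Int.sub_floor_div_mul_nonneg t hT, (Int.sub_floor_div_mul_lt t hT).le⟩
  have := hC _ h2
  rwa [Real.norm_eq_abs, h1] at this

/-- Uniqueness: two periodic solutions of the Riccati equation that agree at one point agree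
everywhere. -/
lemma riccati_unique (hT : 0 < T) (γ : ℝ → ℝ) {ψ : ℝ → ℝ}
    (hφ : ∀ t, HasDerivAt φ (φ t ^ 2 + γ t) t) (hφp : Function.Periodic φ T)
    (hψ : ∀ t, HasDerivAt ψ (ψ t ^ 2 + γ t) t) (hψp : Function.Periodic ψ T)
    {t₀ : ℝ} (heq : φ t₀ = ψ t₀) : φ = ψ := by
  have hφc : Continuous φ := continuous_iff_continuousAt.mpr fun t => (hφ t).continuousAt
  have hψc : Continuous ψ := continuous_iff_continuousAt.mpr fun t => (hψ t).continuousAt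
  obtain ⟨M₁, hM₁⟩ := periodic_bounded hT hφc hφp
  obtain ⟨M₂, hM₂⟩ := periodic_bounded hT hψc hψp
  set M := max M₁ M₂ with hM
  have hMφ : ∀ s, |φ s| ≤ M := fun s => (hM₁ s).trans (le_max_left _ _)
  have hMψ : ∀ s, |ψ s| ≤ M := fun s => (hM₂ s).trans (le_max_right _ _)
  have hM0 : 0 ≤ M := le_trans (abs_nonneg _) (hMφ 0)
  have hLip : ∀ t : ℝ, LipschitzOnWith (2 * M).toNNReal (fun x : ℝ => x ^ 2 + γ t)
      (Metric.closedBall (0:ℝ) M) := by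
    intro t
    apply LipschitzOnWith.of_dist_le_mul
    intro x hx y hy
    rw [Metric.mem_closedBall, Real.dist_eq, sub_zero] at hx hy
    rw [Real.dist_eq, Real.dist_eq]
    have h1 : (x ^ 2 + γ t) - (y ^ 2 + γ t) = (x + y) * (x - y) := by ring
    rw [h1, abs_mul, Real.coe_toNNReal _ (by positivity)]
    exact mul_le_mul_of_nonneg_right ((abs_add_le x y).trans (by linarith)) (abs_nonneg _)
  funext t
  have key := ODE_solution_unique_of_mem_Icc (v := fun t x => x ^ 2 + γ t)
    (s := fun _ => Metric.closedBall (0:ℝ) M) (K := (2 * M).toNNReal)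
    (a := min t t₀ - 1) (b := max t t₀ + 1) (t₀ := t₀) (fun t _ => hLip t)
    ⟨by have := min_le_right t t₀; linarith, by have := le_max_right t t₀; linarith⟩
    hφc.continuousOn (fun s _ => hφ s)
    (fun s _ => by rw [Metric.mem_closedBall, Real.dist_eq, sub_zero]; exact hMφ s)
    hψc.continuousOn (fun s _ => hψ s)
    (fun s _ => by rw [Metric.mem_closedBall, Real.dist_eq, sub_zero]; exact hMψ s)
    heq
  exact key ⟨by have := min_le_left t t₀; linarith, by have := le_max_left t t₀; linarith⟩

/-- The difference inverse satisfies the linear ODE. -/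
lemma diff_inv_deriv {γ χ : ℝ → ℝ}
    (hφ : ∀ t, HasDerivAt φ (φ t ^ 2 + γ t) t)
    (hχ : ∀ t, HasDerivAt χ (χ t ^ 2 + γ t) t)
    (hne : ∀ t, χ t ≠ φ t) (t : ℝ) :
    HasDerivAt (fun s => (χ s - φ s)⁻¹)
      (-2 * φ t * (χ t - φ t)⁻¹ - 1) t := by
  have hne' : χ t - φ t ≠ 0 := sub_ne_zero.mpr (hne t)
  have h : HasDerivAt (fun s => (χ s - φ s)⁻¹) _ t := ((hχ t).sub (hφ t)).inv hne'
  simp only [Pi.sub_apply] at h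
  convert h using 1
  field_simp
  ring

/-- Core of part 1: two everywhere-distinct periodic solutions force nonzero average for `φ`. -/
lemma avg_ne_zero {γ χ : ℝ → ℝ} (hT : 0 < T)
    (hφ : ∀ t, HasDerivAt φ (φ t ^ 2 + γ t) t) (hφp : Function.Periodic φ T)
    (hχ : ∀ t, HasDerivAt χ (χ t ^ 2 + γ t) t) (hχp : Function.Periodic χ T)
    (hne : ∀ t, χ t ≠ φ t) :
    (∫ t in (0:ℝ)..T, φ t) ≠ 0 := by
  intro hA
  have hφc : Continuous φ := continuous_iff_continuousAt.mpr fun t => (hφ t).continuousAt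
  have hrep := rep hφc (diff_inv_deriv hφ hχ hne) T
  have hwT : (χ T - φ T)⁻¹ = (χ 0 - φ 0)⁻¹ := by
    rw [← zero_add T, hχp 0, hφp 0]
  have hPhiT : Phi φ T = 0 := hA
  have heT : ee φ T = 1 := by rw [ee, hPhiT]; simp
  rw [heT, one_mul, hwT] at hrep
  have := gg_T_pos hT hφc
  linarith

/-- Core of part 2: a periodic solution with nonzero average has exactly one companion. -/
lemma exists_second {γ : ℝ → ℝ} (hT : 0 < T)
    (hφ : ∀ t, HasDerivAt φ (φ t ^ 2 + γ t) t) (hφp : Function.Periodic φ T)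
    (hA : (∫ t in (0:ℝ)..T, φ t) ≠ 0) :
    ∃ ψ : ℝ → ℝ, (∀ t, ψ t ≠ φ t) ∧ (∀ t, HasDerivAt ψ (ψ t ^ 2 + γ t) t) ∧
      Function.Periodic ψ T ∧
      ∀ χ : ℝ → ℝ, (∀ t, HasDerivAt χ (χ t ^ 2 + γ t) t) → Function.Periodic χ T →
        (∀ t, χ t ≠ φ t) → χ = ψ := by
  have hφc : Continuous φ := continuous_iff_continuousAt.mpr fun t => (hφ t).continuousAt
  have hPhiT : Phi φ T ≠ 0 := hA
  have heT_ne : ee φ T ≠ 1 := by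
    rw [ee]
    intro h
    rw [← Real.exp_zero, Real.exp_eq_exp] at h
    exact hPhiT (by linarith)
  have h1e : (1:ℝ) - ee φ T ≠ 0 := sub_ne_zero.mpr (Ne.symm heT_ne)
  set v0 : ℝ := gg φ T / (1 - ee φ T) with hv0
  set h : ℝ → ℝ := fun t => v0 - gg φ t with hh
  have hh' : ∀ t, HasDerivAt h (-(ee φ t)) t :=
    fun t => HasDerivAt.const_sub v0 (hasDerivAt_gg hφc t)
  have hanti : StrictAnti h := by
    apply strictAnti_of_deriv_neg
    intro t
    rw [(hh' t).deriv]
    exact neg_neg_iff_pos.mpr (ee_pos t)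
  have hv0mul : v0 * (1 - ee φ T) = gg φ T := div_mul_cancel₀ _ h1e
  have hmul : ∀ t, h (t + T) = ee φ T * h t := by
    intro t
    simp only [hh]
    rw [gg_add hφc hφp]
    linear_combination hv0mul
  have hne0 : ∀ t, h t ≠ 0 := by
    intro t ht0
    have h2 : h (t + T) = 0 := by rw [hmul, ht0, mul_zero]
    have h3 : h (t + T) < h t := hanti (by linarith)
    rw [ht0, h2] at h3
    exact lt_irrefl 0 h3
  set v : ℝ → ℝ := fun t => Real.exp (-(2 * Phi φ t)) * h t with hv
  have hvne : ∀ t, v t ≠ 0 := fun t => mul_ne_zero (Real.exp_ne_zero _) (hne0 t)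
  have hexp : ∀ t, Real.exp (-(2 * Phi φ t)) * ee φ t = 1 := by
    intro t
    rw [ee, ← Real.exp_add]
    simp
  have heevv : ∀ t, ee φ t * v t = h t := by
    intro t
    simp only [hv]
    calc ee φ t * (Real.exp (-(2 * Phi φ t)) * h t)
        = (Real.exp (-(2 * Phi φ t)) * ee φ t) * h t := by ring
      _ = h t := by rw [hexp t, one_mul]
  have hvd : ∀ t, HasDerivAt v (-2 * φ t * v t - 1) t := by
    intro t
    have e1 : HasDerivAt (fun s => Real.exp (-(2 * Phi φ s)))
        (Real.exp (-(2 * Phi φ t)) * (-(2 * φ t))) t := by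
      exact (((hasDerivAt_Phi hφc t).const_mul 2).neg).exp
    have h2 : HasDerivAt v _ t := e1.mul (hh' t)
    convert h2 using 1
    simp only [hv]
    linear_combination hexp t
  set ψ : ℝ → ℝ := fun t => φ t + (v t)⁻¹ with hψ
  have hψd : ∀ t, HasDerivAt ψ (ψ t ^ 2 + γ t) t := by
    intro t
    have hd : HasDerivAt ψ _ t := (hφ t).add ((hvd t).inv (hvne t))
    convert hd using 1
    have hvt := hvne t
    simp only [hψ]
    field_simp
    ring
  have hψp : Function.Periodic ψ T := by
    intro t
    have hvp : v (t + T) = v t := by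
      simp only [hv]
      rw [hmul, Phi_add hφc hφp]
      have : Real.exp (-(2 * (Phi φ t + Phi φ T))) * ee φ T = Real.exp (-(2 * Phi φ t)) := by
        rw [ee, ← Real.exp_add]
        ring_nf
      calc Real.exp (-(2 * (Phi φ t + Phi φ T))) * (ee φ T * h t)
          = (Real.exp (-(2 * (Phi φ t + Phi φ T))) * ee φ T) * h t := by ring
        _ = Real.exp (-(2 * Phi φ t)) * h t := by rw [this]
    simp only [hψ]
    rw [hφp t, hvp]
  have hψne : ∀ t, ψ t ≠ φ t := by
    intro t he
    have : (v t)⁻¹ = 0 := by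
      have : φ t + (v t)⁻¹ = φ t := he
      linarith
    exact hvne t (inv_eq_zero.mp this)
  refine ⟨ψ, hψne, hψd, hψp, ?_⟩
  intro χ hχ hχp hχne
  have hw := diff_inv_deriv hφ hχ hχne
  have hrepT := rep hφc hw T
  have hwT : (χ T - φ T)⁻¹ = (χ 0 - φ 0)⁻¹ := by
    rw [← zero_add T, hχp 0, hφp 0]
  rw [hwT] at hrepT
  have hw0 : (χ 0 - φ 0)⁻¹ = v0 := by
    rw [hv0, eq_div_iff h1e]
    linarith
  funext t
  have hrt := rep hφc hw t
  rw [hw0] at hrt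
  have hwv : (χ t - φ t)⁻¹ = v t := by
    have heet : ee φ t ≠ 0 := (ee_pos t).ne'
    apply mul_left_cancel₀ heet
    rw [hrt, heevv t]
  simp only [hψ]
  rw [← hwv, inv_inv]
  ring

theorem stmt_3 (T : ℝ) (hT : 0 < T) (γ : ℝ → ℝ) (hγc : Continuous γ)
    (hγp : Function.Periodic γ T) :
    -- two distinct periodic solutions have nonzero average
    (∀ φ ψ : ℝ → ℝ, (∀ t, HasDerivAt φ (φ t ^ 2 + γ t) t) → Function.Periodic φ T →
      (∀ t, HasDerivAt ψ (ψ t ^ 2 + γ t) t) → Function.Periodic ψ T → φ ≠ ψ →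
      (∫ t in (0:ℝ)..T, φ t) ≠ 0 ∧ (∫ t in (0:ℝ)..T, ψ t) ≠ 0) ∧
    -- a periodic solution with nonzero average implies exactly two periodic solutions
    (∀ φ : ℝ → ℝ, (∀ t, HasDerivAt φ (φ t ^ 2 + γ t) t) → Function.Periodic φ T →
      (∫ t in (0:ℝ)..T, φ t) ≠ 0 →
      ∃ φ₁ φ₂ : ℝ → ℝ, φ₁ ≠ φ₂ ∧
        (∀ t, HasDerivAt φ₁ (φ₁ t ^ 2 + γ t) t) ∧ Function.Periodic φ₁ T ∧
        (∀ t, HasDerivAt φ₂ (φ₂ t ^ 2 + γ t) t) ∧ Function.Periodic φ₂ T ∧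
        ∀ χ : ℝ → ℝ, (∀ t, HasDerivAt χ (χ t ^ 2 + γ t) t) → Function.Periodic χ T →
          χ = φ₁ ∨ χ = φ₂) := by
  constructor
  · intro φ ψ hφ hφp hψ hψp hne
    have hnever : ∀ t, ψ t ≠ φ t := by
      intro t h
      exact hne (riccati_unique hT γ hφ hφp hψ hψp h.symm)
    have hnever' : ∀ t, φ t ≠ ψ t := fun t h => hnever t h.symm
    exact ⟨avg_ne_zero hT hφ hφp hψ hψp hnever, avg_ne_zero hT hψ hψp hφ hφp hnever'⟩
  · intro φ hφ hφp hA
    obtain ⟨ψ, hψne, hψd, hψp, huniq⟩ := exists_second hT hφ hφp hA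
    refine ⟨φ, ψ, ?_, hφ, hφp, hψd, hψp, ?_⟩
    · intro h
      exact hψne 0 (by rw [h])
    · intro χ hχ hχp
      by_cases hc : ∃ t, χ t = φ t
      · left
        obtain ⟨t, ht⟩ := hc
        exact riccati_unique hT γ hχ hχp hφ hφp ht
      · right
        push_neg at hc
        exact huniq χ hχ hχp hc
end

section
/- Let γ: ℝ → ℝ be a continuous T-periodic function. If γ̄ > 0, or if γ̄ = 0 and γ is not identically zero, then the equation x' = x² + γ(t) has no T-periodic solutions. -/
open MeasureTheory intervalIntegral Set in
theorem stmt_5 (T : ℝ) (hT : 0 < T) (γ : ℝ → ℝ) (hγc : Continuous γ)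
    (hγp : Function.Periodic γ T)
    (h : 0 < (1 / T) * (∫ t in (0:ℝ)..T, γ t) ∨
      ((1 / T) * (∫ t in (0:ℝ)..T, γ t) = 0 ∧ ∃ t, γ t ≠ 0)) :
    ¬ ∃ φ : ℝ → ℝ, (∀ t, HasDerivAt φ (φ t ^ 2 + γ t) t) ∧ Function.Periodic φ T := by
  rintro ⟨φ, hφd, hφp⟩
  have hφc : Continuous φ :=
    continuous_iff_continuousAt.mpr fun t => (hφd t).continuousAt
  have hcont : Continuous fun t => φ t ^ 2 + γ t := by continuity
  have hFTC : (∫ t in (0:ℝ)..T, (φ t ^ 2 + γ t)) = φ T - φ 0 :=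
    intervalIntegral.integral_eq_sub_of_hasDerivAt (fun t _ => hφd t)
      (hcont.intervalIntegrable 0 T)
  have hper : φ T = φ 0 := by simpa using hφp 0
  have hsum : (∫ t in (0:ℝ)..T, φ t ^ 2) + (∫ t in (0:ℝ)..T, γ t) = 0 := by
    rw [← intervalIntegral.integral_add (f := fun t => φ t ^ 2) ((hφc.pow 2).intervalIntegrable 0 T)
      (hγc.intervalIntegrable 0 T), hFTC, hper, sub_self]
  have hsq_nonneg : 0 ≤ ∫ t in (0:ℝ)..T, φ t ^ 2 :=
    intervalIntegral.integral_nonneg hT.le fun t _ => sq_nonneg _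
  rcases h with h | ⟨h0, t₀, ht₀⟩
  · have hγpos : 0 < ∫ t in (0:ℝ)..T, γ t := by
      by_contra hle
      push_neg at hle
      nlinarith [one_div_pos.mpr hT]
    linarith
  · have hγ0 : (∫ t in (0:ℝ)..T, γ t) = 0 := by
      have : (1 / T) ≠ 0 := by positivity
      field_simp at h0
      linarith
    have hsq0 : (∫ t in (0:ℝ)..T, φ t ^ 2) = 0 := by linarith
    -- φ² = 0 a.e. on Ioc 0 T, hence φ = 0 on Ioc 0 T by continuity
    have hae : (fun t => φ t ^ 2) =ᵐ[volume.restrict (Ioc (0:ℝ) T)] 0 := by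
      have := (intervalIntegral.integral_eq_zero_iff_of_le_of_nonneg_ae hT.le
        (Filter.Eventually.of_forall fun t => sq_nonneg (φ t))
        ((hφc.pow 2).intervalIntegrable 0 T)).mp hsq0
      exact this
    have heq : EqOn (fun t => φ t ^ 2) 0 (Ioc (0:ℝ) T) :=
      (volume : Measure ℝ).eqOn_Ioc_of_ae_eq hae (hφc.pow 2).continuousOn continuousOn_const
    have hφ0 : ∀ t, φ t = 0 := by
      intro t
      obtain ⟨y, hy, hxy⟩ := hφp.exists_mem_Ioc hT t 0
      rw [zero_add] at hy
      have := heq hy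
      simp only [Pi.zero_apply, pow_eq_zero_iff] at this
      rw [hxy]
      exact pow_eq_zero_iff (n := 2) (by norm_num) |>.mp this
    -- now φ ≡ 0, so derivative is 0, forcing γ ≡ 0
    have : φ = fun _ => (0:ℝ) := funext hφ0
    have hderiv : HasDerivAt φ 0 t₀ := by
      rw [this]; exact hasDerivAt_const _ _
    have := (hφd t₀).unique hderiv
    rw [hφ0 t₀] at this
    simp at this
    exact ht₀ this
end

section
/- Let γ: ℝ → ℝ be a continuous T-periodic function. If there exists p ∈ C¹_T(ℝ) such that p'(t) ≥ p(t)² + γ(t) for all t ∈ ℝ, then the equation x' = x² + γ(t) has at least one T-periodic solution. -/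
open Set

private lemma aux_nonpos {a b K : ℝ} {u : ℝ → ℝ}
    (hu : ContinuousOn u (Icc a b))
    (hder : ∀ t ∈ Ioo a b, 0 < u t → ∃ d, d ≤ K * u t ∧ HasDerivAt u d t)
    (h0 : u a ≤ 0) : ∀ t ∈ Icc a b, u t ≤ 0 := by
  by_contra hcon
  push_neg at hcon
  obtain ⟨t₁, ht₁, ht₁pos⟩ := hcon
  have hat₁ : a < t₁ := by
    rcases lt_or_eq_of_le ht₁.1 with h | h
    · exact h
    · exact absurd (h ▸ ht₁pos) (not_lt.2 h0)
  set S : Set ℝ := Icc a t₁ ∩ u ⁻¹' (Iic 0) with hS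
  have hSc : IsClosed S :=
    (hu.mono (Icc_subset_Icc le_rfl ht₁.2)).preimage_isClosed_of_isClosed isClosed_Icc isClosed_Iic
  have hSne : S.Nonempty := ⟨a, ⟨le_rfl, le_of_lt hat₁⟩, h0⟩
  have hSbdd : BddAbove S := ⟨t₁, fun x hx => hx.1.2⟩
  set s := sSup S with hs
  have hsS : s ∈ S := hSc.csSup_mem hSne hSbdd
  have hsle : u s ≤ 0 := hsS.2
  have hs1 : s < t₁ := lt_of_le_of_ne hsS.1.2 (fun h => absurd (h ▸ hsle) (not_le.2 ht₁pos))
  have hsa : a ≤ s := hsS.1.1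
  have hpos : ∀ t ∈ Ioc s t₁, 0 < u t := by
    intro t ht
    by_contra hle
    push_neg at hle
    exact absurd (le_csSup hSbdd (⟨⟨hsa.trans ht.1.le, ht.2⟩, hle⟩ : t ∈ S)) (not_le.2 ht.1)
  set w : ℝ → ℝ := fun t => u t * Real.exp (-K * t) with hw
  have hwc : ContinuousOn w (Icc s t₁) := by
    apply ContinuousOn.mul
    · exact hu.mono (Icc_subset_Icc hsa (ht₁.2))
    · fun_prop
  have hwd : ∀ t ∈ Ioo s t₁, HasDerivAt w (deriv w t) t ∧ deriv w t ≤ 0 := by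
    intro t ht
    have htab : t ∈ Ioo a b := ⟨hsa.trans_lt ht.1, lt_of_lt_of_le ht.2 ht₁.2⟩
    have hut : 0 < u t := hpos t ⟨ht.1, ht.2.le⟩
    obtain ⟨d, hd, hdd⟩ := hder t htab hut
    have hexp : HasDerivAt (fun r => Real.exp (-K * r)) (Real.exp (-K * t) * (-K)) t := by
      simpa using ((hasDerivAt_id t).const_mul (-K)).exp
    have hD : HasDerivAt w (d * Real.exp (-K * t) + u t * (Real.exp (-K * t) * (-K))) t :=
      hdd.mul hexp
    have hDle : d * Real.exp (-K * t) + u t * (Real.exp (-K * t) * (-K)) ≤ 0 := by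
      have : (d - K * u t) * Real.exp (-K * t) ≤ 0 :=
        mul_nonpos_of_nonpos_of_nonneg (by linarith) (Real.exp_nonneg _)
      nlinarith [Real.exp_pos (-K * t)]
    exact ⟨hD.deriv ▸ hD, hD.deriv ▸ hDle⟩
  have hanti : AntitoneOn w (Icc s t₁) := by
    apply antitoneOn_of_deriv_nonpos (convex_Icc s t₁) hwc
    · intro t ht
      rw [interior_Icc] at ht
      exact ((hwd t ht).1).differentiableAt.differentiableWithinAt
    · intro t ht
      rw [interior_Icc] at ht
      exact (hwd t ht).2
  have := hanti ⟨le_rfl, hs1.le⟩ ⟨hs1.le, le_rfl⟩ hs1.le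
  have hw1 : 0 < w t₁ := mul_pos ht₁pos (Real.exp_pos _)
  have hws : w s ≤ 0 := mul_nonpos_of_nonpos_of_nonneg hsle (Real.exp_nonneg _)
  linarith

private lemma aux_exists {v : ℝ → ℝ → ℝ} {T Cb : ℝ} (hT : 0 < T) {L : NNReal}
    (hlip : ∀ t, LipschitzWith L (v t)) (hcont : ∀ x, Continuous fun t => v t x)
    (hbd : ∀ t x, |v t x| ≤ Cb) (x₀ : ℝ) :
    ∃ f : ℝ → ℝ, f 0 = x₀ ∧ ∀ t ∈ Icc 0 T, HasDerivWithinAt f (v t (f t)) (Icc 0 T) t := by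
  have hCb : 0 ≤ Cb := le_trans (abs_nonneg _) (hbd 0 0)
  obtain ⟨f, hf0, hf⟩ := IsPicardLindelof.exists_eq_forall_mem_Icc_hasDerivWithinAt₀ (f := v)
    (t₀ := (⟨0, le_rfl, hT.le⟩ : Icc (0:ℝ) T)) (x₀ := x₀)
    (a := ⟨Cb * T + 1, add_nonneg (mul_nonneg hCb hT.le) zero_le_one⟩) (L := ⟨Cb, hCb⟩) (K := L)
    { lipschitzOnWith := fun t _ => (hlip t).lipschitzOnWith
      continuousOn := fun x _ => (hcont x).continuousOn
      norm_le := fun t _ x _ => hbd t x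
      mul_max_le := by
        norm_num [max_eq_left hT.le]
        exact (show Cb * T ≤ Cb * T + 1 by linarith) }
  exact ⟨f, hf0, hf⟩

theorem stmt_6 (T : ℝ) (hT : 0 < T) (γ : ℝ → ℝ) (hγc : Continuous γ)
    (hγp : Function.Periodic γ T)
    (p : ℝ → ℝ) (hp : ContDiff ℝ 1 p) (hpper : Function.Periodic p T)
    (hineq : ∀ t, deriv p t ≥ p t ^ 2 + γ t) :
    ∃ φ : ℝ → ℝ, (∀ t, HasDerivAt φ (φ t ^ 2 + γ t) t) ∧ Function.Periodic φ T := by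
  -- bounds for γ and p
  have hγb : ∃ M, 0 ≤ M ∧ ∀ t, |γ t| ≤ M := by
    obtain ⟨C, hC⟩ := (isCompact_Icc (a := (0:ℝ)) (b := T)).exists_bound_of_continuousOn
      hγc.continuousOn
    refine ⟨max C 0, le_max_right _ _, fun t => ?_⟩
    obtain ⟨y, hy, hfy⟩ := hγp.exists_mem_Ico₀ hT t
    rw [hfy]
    exact le_trans (by simpa [Real.norm_eq_abs] using hC y ⟨hy.1, hy.2.le⟩) (le_max_left _ _)
  obtain ⟨M, hM0, hM⟩ := hγb
  have hpb : ∃ Bp, 0 ≤ Bp ∧ ∀ t, |p t| ≤ Bp := by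
    obtain ⟨C, hC⟩ := (isCompact_Icc (a := (0:ℝ)) (b := T)).exists_bound_of_continuousOn
      (hp.continuous.continuousOn)
    refine ⟨max C 0, le_max_right _ _, fun t => ?_⟩
    obtain ⟨y, hy, hfy⟩ := hpper.exists_mem_Ico₀ hT t
    rw [hfy]
    exact le_trans (by simpa [Real.norm_eq_abs] using hC y ⟨hy.1, hy.2.le⟩) (le_max_left _ _)
  obtain ⟨Bp, hBp0, hBp⟩ := hpb
  -- constants
  set c : ℝ := -(Real.sqrt M + Bp + 1) with hc_def
  set K₀ : ℝ := Real.sqrt M + 2 * Bp + 1 with hK₀_def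
  have hsqrt : 0 ≤ Real.sqrt M := Real.sqrt_nonneg M
  have hK₀0 : 0 < K₀ := by rw [hK₀_def]; linarith
  have hcp : ∀ t, c ≤ p t := fun t => by
    have := (abs_le.1 (hBp t)).1; rw [hc_def]; linarith
  have hcBp : c ≤ Bp := by rw [hc_def]; linarith
  have hcK₀ : |c| ≤ K₀ := by
    rw [hc_def, hK₀_def, abs_le]; constructor <;> linarith
  have hBpK₀ : Bp ≤ K₀ := by rw [hK₀_def]; linarith
  have hc2 : M ≤ c ^ 2 := by
    have h1 : Real.sqrt M ^ 2 = M := Real.sq_sqrt hM0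
    rw [hc_def]; nlinarith
  -- the truncated vector field
  set proj : ℝ → ℝ := fun x => max c (min x Bp) with hproj_def
  set v : ℝ → ℝ → ℝ := fun t x => (proj x) ^ 2 + γ t with hv_def
  have hprojK₀ : ∀ x, |proj x| ≤ K₀ := by
    intro x
    rw [abs_le]
    constructor
    · calc -K₀ ≤ c := by cases abs_le.1 hcK₀; linarith
        _ ≤ proj x := le_max_left _ _
    · apply max_le
      · cases abs_le.1 hcK₀; linarith
      · exact le_trans (min_le_right _ _) hBpK₀
  have hproj_lip : ∀ x y, |proj x - proj y| ≤ |x - y| := by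
    intro x y
    calc |max c (min x Bp) - max c (min y Bp)|
        = |max (min x Bp) c - max (min y Bp) c| := by rw [max_comm c, max_comm c]
      _ ≤ |min x Bp - min y Bp| := abs_max_sub_max_le_abs _ _ _
      _ = |min x Bp - min y Bp| := rfl
      _ ≤ max |x - y| |Bp - Bp| := abs_min_sub_min_le_max _ _ _ _
      _ = |x - y| := by simp
  have hproj_eq : ∀ x, c ≤ x → x ≤ Bp → proj x = x := by
    intro x h1 h2
    rw [hproj_def]
    simp only [min_eq_left h2, max_eq_right h1]
  set L : NNReal := (2 * K₀).toNNReal with hL_def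
  have hLcoe : (L : ℝ) = 2 * K₀ := Real.coe_toNNReal _ (by linarith)
  have hlip : ∀ t, LipschitzWith L (v t) := by
    intro t
    apply LipschitzWith.of_dist_le_mul
    intro x y
    rw [Real.dist_eq, Real.dist_eq, hLcoe]
    have h1 : v t x - v t y = (proj x - proj y) * (proj x + proj y) := by
      rw [hv_def]; ring
    rw [h1, abs_mul]
    have h2 : |proj x + proj y| ≤ 2 * K₀ := by
      calc |proj x + proj y| ≤ |proj x| + |proj y| := abs_add_le _ _
        _ ≤ 2 * K₀ := by have := hprojK₀ x; have := hprojK₀ y; linarith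
    calc |proj x - proj y| * |proj x + proj y| ≤ |x - y| * (2 * K₀) :=
          mul_le_mul (hproj_lip x y) h2 (abs_nonneg _) (abs_nonneg _)
      _ = 2 * K₀ * |x - y| := by ring
  have hcontv : ∀ x, Continuous fun t => v t x := fun x => by
    rw [hv_def]; fun_prop
  have hbdv : ∀ t x, |v t x| ≤ K₀ ^ 2 + M := by
    intro t x
    calc |v t x| ≤ |(proj x) ^ 2| + |γ t| := abs_add_le _ _
      _ ≤ K₀ ^ 2 + M := by
          have h2 := hprojK₀ x
          have h3 := hM t
          nlinarith [abs_nonneg (proj x), sq_abs (proj x), abs_pow (proj x) 2]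
  -- choose solutions
  choose sol hsol0 hsolD using fun x₀ => aux_exists hT hlip hcontv hbdv x₀
  have hsolc : ∀ x₀, ContinuousOn (sol x₀) (Icc 0 T) := fun x₀ t ht =>
    (hsolD x₀ t ht).continuousWithinAt
  have hIci : ∀ x₀, ∀ t ∈ Ico 0 T, HasDerivWithinAt (sol x₀) (v t (sol x₀ t)) (Ici t) t :=
    fun x₀ t ht => (hsolD x₀ t ⟨ht.1, ht.2.le⟩).mono_of_mem_nhdsWithin (Icc_mem_nhdsGE_of_mem ht)
  have hInt : ∀ x₀, ∀ t ∈ Ioo (0:ℝ) T, HasDerivAt (sol x₀) (v t (sol x₀ t)) t :=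
    fun x₀ t ht => (hsolD x₀ t ⟨ht.1.le, ht.2.le⟩).hasDerivAt (Icc_mem_nhds ht.1 ht.2)
  -- the Poincaré map
  set P : ℝ → ℝ := fun x₀ => sol x₀ T with hP_def
  have hPlip : ∀ x y, dist (P x) (P y) ≤ dist x y * Real.exp (L * T) := by
    intro x y
    have := dist_le_of_trajectories_ODE hlip (hsolc x) (hIci x) (hsolc y) (hIci y)
      (le_of_eq (by rw [hsol0, hsol0])) T ⟨hT.le, le_rfl⟩
    simpa using this
  have hPcont : Continuous P := by
    apply LipschitzWith.continuous (K := (Real.exp (L * T)).toNNReal)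
    apply LipschitzWith.of_dist_le_mul
    intro x y
    rw [Real.coe_toNNReal _ (Real.exp_nonneg _)]
    calc dist (P x) (P y) ≤ dist x y * Real.exp (L * T) := hPlip x y
      _ = Real.exp (L * T) * dist x y := by ring
  -- upper comparison with p
  have hupper : ∀ x₀, x₀ ≤ p 0 → ∀ t ∈ Icc 0 T, sol x₀ t ≤ p t := by
    intro x₀ hx₀ t ht
    have key : ∀ t ∈ Icc 0 T, sol x₀ t - p t ≤ 0 := by
      apply aux_nonpos (K := 2 * K₀)
      · exact (hsolc x₀).sub hp.continuous.continuousOn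
      · intro t ht hpos
        have hsolp : p t < sol x₀ t := by linarith [hpos]
        have hd1 : HasDerivAt (fun r => sol x₀ r - p r) (v t (sol x₀ t) - deriv p t) t :=
          (hInt x₀ t ht).sub ((hp.differentiable one_ne_zero).differentiableAt.hasDerivAt)
        refine ⟨v t (sol x₀ t) - deriv p t, ?_, hd1⟩
        have h2 := hineq t
        have h3 : v t (sol x₀ t) - deriv p t ≤ (proj (sol x₀ t)) ^ 2 - p t ^ 2 := by
          rw [hv_def]; dsimp only; linarith
        have hq1 : p t ≤ proj (sol x₀ t) := by
          apply le_max_of_le_right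
          exact le_min hsolp.le (abs_le.1 (hBp t)).2
        have hq2 : proj (sol x₀ t) ≤ sol x₀ t :=
          max_le (le_trans (hcp t) hsolp.le) (min_le_left _ _)
        have hq3 := hprojK₀ (sol x₀ t)
        have hp3 : |p t| ≤ K₀ := le_trans (hBp t) hBpK₀
        have h4 : (proj (sol x₀ t)) ^ 2 - p t ^ 2 ≤ 2 * K₀ * (sol x₀ t - p t) := by
          rcases abs_le.1 hq3 with ⟨hq3a, hq3b⟩
          rcases abs_le.1 hp3 with ⟨hp3a, hp3b⟩
          nlinarith
        linarith
      · rw [hsol0]; linarith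
    linarith [key t ht]
  -- lower comparison with the constant c
  have hlower : ∀ x₀, c ≤ x₀ → ∀ t ∈ Icc 0 T, c ≤ sol x₀ t := by
    intro x₀ hx₀ t ht
    have key : ∀ t ∈ Icc 0 T, c - sol x₀ t ≤ 0 := by
      apply aux_nonpos (K := 2 * K₀)
      · exact continuousOn_const.sub (hsolc x₀)
      · intro t ht hpos
        have hsolc' : sol x₀ t < c := by linarith [hpos]
        refine ⟨-(v t (sol x₀ t)), ?_, (hInt x₀ t ht).const_sub c⟩
        have hproj : proj (sol x₀ t) = c := by
          rw [hproj_def]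
          simp only [min_eq_left (le_trans hsolc'.le hcBp), max_eq_left hsolc'.le]
        have h1 : 0 ≤ v t (sol x₀ t) := by
          rw [hv_def]; dsimp only; rw [hproj]
          have := (abs_le.1 (hM t)).1
          nlinarith
        nlinarith
      · rw [hsol0]; linarith
    linarith [key t ht]
  -- fixed point of P via IVT
  have hcp0 : c ≤ p 0 := hcp 0
  have hgc : c ≤ P c := hlower c le_rfl T ⟨hT.le, le_rfl⟩
  have hgp : P (p 0) ≤ p 0 := by
    have := hupper (p 0) le_rfl T ⟨hT.le, le_rfl⟩
    have hpT : p T = p 0 := by have := hpper 0; rwa [zero_add] at this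
    rw [hP_def]; dsimp only; linarith [this]
  have hivt : ∃ x, x ∈ Icc c (p 0) ∧ P x = x := by
    have hgcont : ContinuousOn (fun x => P x - x) (Icc c (p 0)) :=
      (hPcont.sub continuous_id).continuousOn
    have h0mem : (0:ℝ) ∈ Icc ((fun x => P x - x) (p 0)) ((fun x => P x - x) c) := by
      constructor
      · show P (p 0) - p 0 ≤ 0
        linarith
      · show 0 ≤ P c - c
        linarith
    obtain ⟨x, hx, hgx⟩ := intermediate_value_Icc' hcp0 hgcont h0mem
    exact ⟨x, hx, by have h : P x - x = 0 := hgx; linarith⟩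
  obtain ⟨xs, hxs, hPxs⟩ := hivt
  -- the solution through the fixed point
  set X : ℝ → ℝ := sol xs with hX_def
  have hX0 : X 0 = xs := hsol0 xs
  have hXT : X T = xs := hPxs
  have hXlow : ∀ t ∈ Icc 0 T, c ≤ X t := hlower xs hxs.1
  have hXup : ∀ t ∈ Icc 0 T, X t ≤ p t := hupper xs hxs.2
  have hXD : ∀ t ∈ Icc 0 T, HasDerivWithinAt X (X t ^ 2 + γ t) (Icc 0 T) t := by
    intro t ht
    have hx : proj (X t) = X t :=
      hproj_eq _ (hXlow t ht) (le_trans (hXup t ht) (abs_le.1 (hBp t)).2)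
    have := hsolD xs t ht
    rw [hv_def] at this; dsimp only at this; rwa [hx] at this
  -- the periodic extension
  set φ : ℝ → ℝ := fun t => X (T * Int.fract (t / T)) with hφ_def
  have hperφ : Function.Periodic φ T := by
    intro t
    have h1 : (t + T) / T = t / T + 1 := by field_simp
    show X (T * Int.fract ((t + T) / T)) = X (T * Int.fract (t / T))
    rw [h1, Int.fract_add_one]
  have hTne : T ≠ 0 := ne_of_gt hT
  -- the local formula for φ
  have hφ_eq : ∀ (m : ℤ) (r : ℝ), T * (m : ℝ) ≤ r → r < T * (m : ℝ) + T →
      φ r = X (r - T * (m : ℝ)) := by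
    intro m r h1 h2
    have hfl : ⌊r / T⌋ = m := by
      rw [Int.floor_eq_iff]
      constructor
      · rw [le_div_iff₀ hT]; linarith
      · rw [div_lt_iff₀ hT]; linarith
    show X (T * Int.fract (r / T)) = X (r - T * (m : ℝ))
    rw [Int.fract, hfl]
    congr 1
    field_simp
  have hγk : ∀ (r : ℝ) (m : ℤ), γ (r - T * (m : ℝ)) = γ r := by
    intro r m
    have := (hγp.int_mul m).sub_eq r
    rwa [mul_comm (m : ℝ) T] at this
  refine ⟨φ, ?_, hperφ⟩
  intro t
  set k : ℤ := ⌊t / T⌋ with hk_def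
  set a : ℝ := T * (k : ℝ) with ha_def
  set s : ℝ := T * Int.fract (t / T) with hs_def
  have hs_eq : s = t - a := by
    rw [hs_def, Int.fract, ha_def, hk_def]
    field_simp
  have hs_mem : s ∈ Ico 0 T := by
    constructor
    · exact mul_nonneg hT.le (Int.fract_nonneg _)
    · calc T * Int.fract (t / T) < T * 1 := (mul_lt_mul_iff_right₀ hT).2 (Int.fract_lt_one _)
        _ = T := mul_one T
  have hφt : φ t = X s := rfl
  have hγs : γ s = γ t := by rw [hs_eq, ha_def]; exact hγk t k
  rcases eq_or_lt_of_le hs_mem.1 with hs0 | hs0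
  · -- s = 0, t = a = T * k : glue left and right derivatives
    have ht_eq : t = a := by rw [← sub_eq_zero, ← hs_eq, ← hs0]
    have hφt0 : φ t = X 0 := by rw [hφt, ← hs0]
    have hγt0 : γ t = γ 0 := by
      have h := hγk t k
      rw [← ha_def] at h
      rw [← h, ht_eq, sub_self]
    have hγT0 : γ T = γ 0 := by have := hγp 0; rwa [zero_add] at this
    have hXd0 : HasDerivWithinAt X (X 0 ^ 2 + γ 0) (Ici 0) 0 :=
      (hXD 0 ⟨le_rfl, hT.le⟩).mono_of_mem_nhdsWithin (Icc_mem_nhdsGE_of_mem ⟨le_rfl, hT⟩)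
    have hXdT : HasDerivWithinAt X (X 0 ^ 2 + γ 0) (Iic T) T := by
      have h1 : X T ^ 2 + γ T = X 0 ^ 2 + γ 0 := by rw [hXT, ← hX0, hγT0]
      have := (hXD T ⟨hT.le, le_rfl⟩).mono_of_mem_nhdsWithin (Icc_mem_nhdsLE_of_mem ⟨hT, le_rfl⟩)
      rwa [h1] at this
    -- right derivative
    have hright : HasDerivWithinAt φ (X 0 ^ 2 + γ 0) (Ici t) t := by
      have hg : HasDerivWithinAt X (X 0 ^ 2 + γ 0) (Ici 0) ((fun r => r - a) t) := by
        have he : (fun r => r - a) t = 0 := by show t - a = 0; rw [ht_eq, sub_self]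
        rw [he]; exact hXd0
      have hmaps : MapsTo (fun r => r - a) (Ici t) (Ici 0) := by
        intro r hr
        have h1 : t ≤ r := hr
        show (0:ℝ) ≤ r - a
        rw [ht_eq] at h1; linarith
      have hcomp := HasDerivWithinAt.comp t hg
        (((hasDerivAt_id t).sub_const a).hasDerivWithinAt) hmaps
      rw [mul_one] at hcomp
      apply hcomp.congr_of_eventuallyEq
      · apply Filter.eventuallyEq_of_mem (Ico_mem_nhdsGE (by linarith : t < t + T))
        intro r hr
        rw [ht_eq] at hr
        have := hφ_eq k r (by rw [← ha_def]; exact hr.1) (by rw [← ha_def]; linarith [hr.2])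
        rw [← ha_def] at this
        exact this
      · rw [hφt0]
        show X 0 = X (t - a)
        rw [ht_eq, sub_self]
    -- left derivative
    have hcast1 : T * ((k - 1 : ℤ) : ℝ) = a - T := by rw [ha_def]; push_cast; ring
    have hleft : HasDerivWithinAt φ (X 0 ^ 2 + γ 0) (Iic t) t := by
      have hg : HasDerivWithinAt X (X 0 ^ 2 + γ 0) (Iic T) ((fun r => r - (a - T)) t) := by
        have he : (fun r => r - (a - T)) t = T := by
          show t - (a - T) = T
          rw [ht_eq]; ring
        rw [he]; exact hXdT
      have hmaps : MapsTo (fun r => r - (a - T)) (Iic t) (Iic T) := by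
        intro r hr
        have h1 : r ≤ t := hr
        show r - (a - T) ≤ T
        rw [ht_eq] at h1; linarith
      have hcomp := HasDerivWithinAt.comp t hg
        (((hasDerivAt_id t).sub_const (a - T)).hasDerivWithinAt) hmaps
      rw [mul_one] at hcomp
      apply hcomp.congr_of_eventuallyEq
      · apply Filter.eventuallyEq_of_mem (Ioc_mem_nhdsLE (by linarith : t - T < t))
        intro r hr
        rw [ht_eq] at hr
        rcases eq_or_lt_of_le hr.2 with hrT | hrT
        · have h1 : φ r = X 0 := by rw [hrT, ← ht_eq, hφt0]
          rw [h1]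
          show X 0 = X (r - (a - T))
          rw [show r - (a - T) = T by rw [hrT]; ring, hXT, ← hX0]
        · have h1 : T * ((k - 1 : ℤ) : ℝ) ≤ r := by rw [hcast1]; linarith [hr.1]
          have h2 : r < T * ((k - 1 : ℤ) : ℝ) + T := by rw [hcast1]; linarith
          have h3 := hφ_eq (k - 1) r h1 h2
          rw [h3, hcast1]
          rfl
      · rw [hφt0]
        show X 0 = X (t - (a - T))
        rw [show t - (a - T) = T by rw [ht_eq]; ring, hXT, ← hX0]
    have hres := hleft.union hright
    rw [Iic_union_Ici, hasDerivWithinAt_univ] at hres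
    rw [hφt0, hγt0]
    exact hres
  · -- 0 < s < T : interior point
    have hsIoo : s ∈ Ioo 0 T := ⟨hs0, hs_mem.2⟩
    have hta : a < t := by
      have := hs_eq ▸ hs0
      linarith
    have htaT : t < a + T := by
      have h1 := hs_mem.2
      rw [hs_eq] at h1; linarith
    have hXd : HasDerivAt X (X s ^ 2 + γ s) s :=
      (hXD s ⟨hsIoo.1.le, hsIoo.2.le⟩).hasDerivAt (Icc_mem_nhds hsIoo.1 hsIoo.2)
    have hg : HasDerivAt X (X s ^ 2 + γ s) ((fun r => r - a) t) := by
      have he : (fun r => r - a) t = s := by show t - a = s; rw [hs_eq]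
      rw [he]; exact hXd
    have hcomp := HasDerivAt.comp t hg ((hasDerivAt_id t).sub_const a)
    rw [mul_one] at hcomp
    have hfinal : HasDerivAt φ (X s ^ 2 + γ s) t := by
      apply hcomp.congr_of_eventuallyEq
      apply Filter.eventuallyEq_of_mem (Ioo_mem_nhds hta htaT)
      intro r hr
      have := hφ_eq k r (by rw [← ha_def]; exact hr.1.le) (by rw [← ha_def]; linarith [hr.2])
      rw [← ha_def] at this
      exact this
    rw [hφt, ← hγs]
    exact hfinal
end

section
/- Let γ: ℝ → ℝ be a continuous T-periodic function and suppose p ∈ C¹_T(ℝ) satisfies p'(t) > p(t)² + γ(t) for all t ∈ ℝ. Then the equation x' = x² + γ(t) has exactly two T-periodic solutions φ⁻ and φ⁺; they satisfy φ⁻(t) < p(t) < φ⁺(t) for all t, and ∫₀ᵀ φ⁻(t) dt < 0 < ∫₀ᵀ φ⁺(t) dt. -/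
open Set Filter Topology

/-- A continuous periodic function is bounded. -/
lemma per_bound {T : ℝ} (hT : 0 < T) {f : ℝ → ℝ} (hf : Continuous f)
    (hper : Function.Periodic f T) : ∃ M : ℝ, 0 ≤ M ∧ ∀ t, |f t| ≤ M := by
  obtain ⟨C, hC⟩ := (isCompact_Icc (a := (0:ℝ)) (b := T)).exists_bound_of_continuousOn
    hf.continuousOn
  refine ⟨max C 0, le_max_right _ _, fun t => ?_⟩
  obtain ⟨y, hy, hfy⟩ := hper.exists_mem_Ico₀ hT t
  rw [hfy]
  exact le_trans (by simpa using hC y ⟨hy.1, hy.2.le⟩) (le_max_left _ _)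

lemma slope_pos_right {g : ℝ → ℝ} {T d t₁ t₂ : ℝ} (hd : 0 < d)
    (h0 : g t₁ = 0) (ht₁ : 0 ≤ t₁) (h12 : t₁ < t₂) (h2T : t₂ ≤ T)
    (hg : HasDerivWithinAt g d (Set.Icc 0 T) t₁) :
    ∃ t, t ∈ Set.Ioc t₁ t₂ ∧ 0 < g t := by
  have hsub : Set.Ioo t₁ t₂ ⊆ Set.Icc 0 T \ {t₁} := fun u hu =>
    ⟨⟨ht₁.trans hu.1.le, hu.2.le.trans h2T⟩, ne_of_gt hu.1⟩
  have htend : Tendsto (slope g t₁) (𝓝[Set.Ioo t₁ t₂] t₁) (𝓝 d) :=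
    (hasDerivWithinAt_iff_tendsto_slope.mp hg).mono_left (nhdsWithin_mono _ hsub)
  have hev : ∀ᶠ u in 𝓝[Set.Ioo t₁ t₂] t₁, 0 < slope g t₁ u :=
    htend.eventually (eventually_gt_nhds hd)
  haveI : (𝓝[Set.Ioo t₁ t₂] t₁).NeBot := by
    rw [nhdsWithin_Ioo_eq_nhdsGT h12]; infer_instance
  obtain ⟨u, hupos, hu⟩ := (hev.and eventually_mem_nhdsWithin).exists
  refine ⟨u, ⟨hu.1, hu.2.le⟩, ?_⟩
  have hne : u - t₁ ≠ 0 := ne_of_gt (sub_pos.mpr hu.1)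
  have hslope : slope g t₁ u = g u / (u - t₁) := by rw [slope_def_field, h0, sub_zero]
  have := mul_pos hupos (sub_pos.mpr hu.1)
  rwa [hslope, div_mul_cancel₀ _ hne] at this

lemma slope_neg_left {g : ℝ → ℝ} {T d t₁ t₂ : ℝ} (hd : 0 < d)
    (h0 : g t₂ = 0) (ht₁ : 0 ≤ t₁) (h12 : t₁ < t₂) (h2T : t₂ ≤ T)
    (hg : HasDerivWithinAt g d (Set.Icc 0 T) t₂) :
    ∃ t, t ∈ Set.Ico t₁ t₂ ∧ g t < 0 := by
  have hsub : Set.Ioo t₁ t₂ ⊆ Set.Icc 0 T \ {t₂} := fun u hu =>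
    ⟨⟨ht₁.trans hu.1.le, hu.2.le.trans h2T⟩, ne_of_lt hu.2⟩
  have htend : Tendsto (slope g t₂) (𝓝[Set.Ioo t₁ t₂] t₂) (𝓝 d) :=
    (hasDerivWithinAt_iff_tendsto_slope.mp hg).mono_left (nhdsWithin_mono _ hsub)
  have hev : ∀ᶠ u in 𝓝[Set.Ioo t₁ t₂] t₂, 0 < slope g t₂ u :=
    htend.eventually (eventually_gt_nhds hd)
  haveI : (𝓝[Set.Ioo t₁ t₂] t₂).NeBot := by
    rw [nhdsWithin_Ioo_eq_nhdsLT h12]; infer_instance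
  obtain ⟨u, hupos, hu⟩ := (hev.and eventually_mem_nhdsWithin).exists
  refine ⟨u, ⟨hu.1.le, hu.2⟩, ?_⟩
  have hslope : slope g t₂ u = g u / (u - t₂) := by rw [slope_def_field, h0, sub_zero]
  rw [hslope] at hupos
  rcases div_pos_iff.mp hupos with ⟨_, hb⟩ | ⟨ha, _⟩
  · exact absurd hb (by linarith [hu.2])
  · exact ha

lemma barrier_nonneg {T : ℝ} {g : ℝ → ℝ}
    (hc : ContinuousOn g (Icc 0 T)) (h0 : 0 ≤ g 0)
    (hcontact : ∀ t ∈ Icc 0 T, g t = 0 → ∃ d, 0 < d ∧ HasDerivWithinAt g d (Icc 0 T) t) :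
    ∀ t ∈ Icc 0 T, 0 ≤ g t := by
  intro t₂ ht₂
  by_contra hneg
  push_neg at hneg
  have h02 : 0 < t₂ := by
    rcases ht₂.1.eq_or_lt with h | h
    · exact absurd hneg (not_lt.mpr (by rw [← h]; exact h0))
    · exact h
  have hsub2 : Icc (0:ℝ) t₂ ⊆ Icc 0 T := Icc_subset_Icc le_rfl ht₂.2
  set S : Set ℝ := Icc 0 t₂ ∩ g ⁻¹' (Ici 0) with hS
  have hScl : IsClosed S :=
    (hc.mono hsub2).preimage_isClosed_of_isClosed isClosed_Icc isClosed_Ici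
  have hScpt : IsCompact S := isCompact_Icc.of_isClosed_subset hScl inter_subset_left
  have h0S : (0:ℝ) ∈ S := ⟨⟨le_rfl, h02.le⟩, h0⟩
  set t₁ := sSup S with ht₁def
  have ht₁S : t₁ ∈ S := hScpt.sSup_mem ⟨0, h0S⟩
  have ht₁T : t₁ ∈ Icc 0 T := hsub2 ht₁S.1
  have h12 : t₁ < t₂ := by
    rcases ht₁S.1.2.eq_or_lt with h | h
    · exact absurd (h ▸ ht₁S.2) (not_le.mpr hneg)
    · exact h
  have hlt : ∀ t ∈ Ioc t₁ t₂, g t < 0 := by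
    intro t ht
    by_contra hge
    push_neg at hge
    have htS : t ∈ S := ⟨⟨ht₁S.1.1.trans ht.1.le, ht.2⟩, hge⟩
    exact absurd (le_csSup (hScpt.bddAbove) htS) (not_le.mpr ht.1)
  -- g t₁ ≤ 0 by right continuity
  have hg1le : g t₁ ≤ 0 := by
    have hct : ContinuousWithinAt g (Ioc t₁ t₂) t₁ :=
      (hc t₁ ht₁T).mono (fun u hu => ⟨ht₁T.1.trans hu.1.le, hu.2.trans ht₂.2⟩)
    haveI : (𝓝[Ioc t₁ t₂] t₁).NeBot := by
      rw [nhdsWithin_Ioc_eq_nhdsGT h12]; infer_instance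
    refine le_of_tendsto hct ?_
    filter_upwards [eventually_mem_nhdsWithin] with u hu
    exact (hlt u hu).le
  have hg1 : g t₁ = 0 := le_antisymm hg1le ht₁S.2
  obtain ⟨d, hd, hder⟩ := hcontact t₁ ht₁T hg1
  obtain ⟨u, hu, hupos⟩ := slope_pos_right hd hg1 ht₁S.1.1 h12 ht₂.2 hder
  exact absurd hupos (not_lt.mpr (hlt u hu).le)

lemma barrier_pos {T : ℝ} {g : ℝ → ℝ}
    (hnn : ∀ t ∈ Icc 0 T, 0 ≤ g t)
    (hcontact : ∀ t ∈ Icc 0 T, g t = 0 → ∃ d, 0 < d ∧ HasDerivWithinAt g d (Icc 0 T) t) :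
    ∀ t ∈ Icc 0 T, t ≠ 0 → 0 < g t := by
  intro t₂ ht₂ hne
  rcases (hnn t₂ ht₂).eq_or_lt with h | h
  · exfalso
    have h02 : 0 < t₂ := ht₂.1.lt_of_ne (Ne.symm hne)
    obtain ⟨d, hd, hder⟩ := hcontact t₂ ht₂ h.symm
    obtain ⟨u, hu, huneg⟩ := slope_neg_left hd h.symm le_rfl h02 ht₂.2 hder
    exact absurd huneg (not_lt.mpr (hnn u ⟨hu.1, hu.2.le.trans ht₂.2⟩))
  · exact h

lemma int_logderiv_zero {T : ℝ} {v v' : ℝ → ℝ} (hv : ∀ t, HasDerivAt v (v' t) t)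
    (hc : Continuous v') (hne : ∀ t, v t ≠ 0) (hper : v T = v 0) :
    ∫ t in (0:ℝ)..T, v' t / v t = 0 := by
  have hvc : Continuous v := continuous_iff_continuousAt.mpr fun t => (hv t).continuousAt
  have hW : ∀ t, HasDerivAt (fun s => Real.log (v s)) (v' t / v t) t := by
    intro t
    have h := (Real.hasDerivAt_log (hne t)).comp t (hv t)
    refine h.congr_deriv ?_
    rw [div_eq_inv_mul]
  have hint : IntervalIntegrable (fun t => v' t / v t) MeasureTheory.volume 0 T :=
    (hc.div hvc hne).intervalIntegrable _ _
  rw [intervalIntegral.integral_eq_sub_of_hasDerivAt (fun t _ => hW t) hint, hper, sub_self]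

lemma int_lt_of_logderiv {T : ℝ} (hT : 0 < T) {v v' e : ℝ → ℝ}
    (hv : ∀ t, HasDerivAt v (v' t) t) (hc : Continuous v') (he : Continuous e)
    (hpos : ∀ t, 0 < v t) (hper : v T = v 0) (hgt : ∀ t, e t * v t < v' t) :
    ∫ t in (0:ℝ)..T, e t < 0 := by
  have hvc : Continuous v := continuous_iff_continuousAt.mpr fun t => (hv t).continuousAt
  have h0 := int_logderiv_zero hv hc (fun t => (hpos t).ne') hper
  have hcont : Continuous (fun t => v' t / v t - e t) :=
    (hc.div hvc fun t => (hpos t).ne').sub he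
  have hposint : 0 < ∫ t in (0:ℝ)..T, (v' t / v t - e t) :=
    intervalIntegral.intervalIntegral_pos_of_pos_on (hcont.intervalIntegrable _ _)
      (fun t _ => sub_pos.mpr ((lt_div_iff₀ (hpos t)).mpr (hgt t))) hT
  have hsplit : (∫ t in (0:ℝ)..T, (v' t / v t - e t))
      = (∫ t in (0:ℝ)..T, v' t / v t) - ∫ t in (0:ℝ)..T, e t :=
    intervalIntegral.integral_sub ((hc.div hvc fun t => (hpos t).ne').intervalIntegrable _ _)
      (he.intervalIntegrable _ _)
  linarith

lemma int_gt_of_logderiv {T : ℝ} (hT : 0 < T) {v v' e : ℝ → ℝ}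
    (hv : ∀ t, HasDerivAt v (v' t) t) (hc : Continuous v') (he : Continuous e)
    (hpos : ∀ t, 0 < v t) (hper : v T = v 0) (hlt : ∀ t, v' t < e t * v t) :
    0 < ∫ t in (0:ℝ)..T, e t := by
  have hvc : Continuous v := continuous_iff_continuousAt.mpr fun t => (hv t).continuousAt
  have h0 := int_logderiv_zero hv hc (fun t => (hpos t).ne') hper
  have hcont : Continuous (fun t => e t - v' t / v t) :=
    he.sub (hc.div hvc fun t => (hpos t).ne')
  have hposint : 0 < ∫ t in (0:ℝ)..T, (e t - v' t / v t) :=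
    intervalIntegral.intervalIntegral_pos_of_pos_on (hcont.intervalIntegrable _ _)
      (fun t _ => sub_pos.mpr ((div_lt_iff₀ (hpos t)).mpr (hlt t))) hT
  have hsplit : (∫ t in (0:ℝ)..T, (e t - v' t / v t))
      = (∫ t in (0:ℝ)..T, e t) - ∫ t in (0:ℝ)..T, v' t / v t :=
    intervalIntegral.integral_sub (he.intervalIntegrable _ _)
      ((hc.div hvc fun t => (hpos t).ne').intervalIntegrable _ _)
  linarith

lemma int_eq_zero_of_logderiv {T : ℝ} {x y γ : ℝ → ℝ}
    (hx : ∀ t, HasDerivAt x (x t ^ 2 + γ t) t) (hy : ∀ t, HasDerivAt y (y t ^ 2 + γ t) t)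
    (hne : ∀ t, y t ≠ x t) (hxp : Function.Periodic x T) (hyp : Function.Periodic y T) :
    (∫ t in (0:ℝ)..T, (x t + y t)) = 0 := by
  have hxc : Continuous x := continuous_iff_continuousAt.mpr fun t => (hx t).continuousAt
  have hyc : Continuous y := continuous_iff_continuousAt.mpr fun t => (hy t).continuousAt
  have hd : ∀ t, HasDerivAt (fun s => y s - x s) ((x t + y t) * (y t - x t)) t := by
    intro t
    have := (hy t).sub (hx t)
    refine this.congr_deriv ?_
    ring
  have h0 := int_logderiv_zero (T := T) (v := fun s => y s - x s)
    (v' := fun t => (x t + y t) * (y t - x t)) hd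
    (by fun_prop) (fun t => sub_ne_zero.mpr (hne t))
    (by have h1 := hyp 0; have h2 := hxp 0; rw [zero_add] at h1 h2; simp only [h1, h2])
  refine Eq.trans (intervalIntegral.integral_congr ?_) h0
  intro t _
  have h := sub_ne_zero.mpr (hne t)
  simp only []
  field_simp

lemma riccati_lower (T : ℝ) (hT : 0 < T) (γ : ℝ → ℝ) (hγc : Continuous γ)
    (hγp : Function.Periodic γ T)
    (p : ℝ → ℝ) (hp : ContDiff ℝ 1 p) (hpper : Function.Periodic p T)
    (hineq : ∀ t, deriv p t > p t ^ 2 + γ t) :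
    ∃ φ : ℝ → ℝ, (∀ t, HasDerivAt φ (φ t ^ 2 + γ t) t) ∧ Function.Periodic φ T ∧
      (∀ t, φ t < p t) := by
  obtain ⟨Γ, hΓ0, hΓ⟩ := per_bound hT hγc hγp
  obtain ⟨Mp, hMp0, hMp⟩ := per_bound hT hp.continuous hpper
  set B := Real.sqrt (Γ + 1) with hBdef
  have hB0 : 0 ≤ B := Real.sqrt_nonneg _
  have hB2 : B ^ 2 = Γ + 1 := Real.sq_sqrt (by linarith)
  set L : ℝ := -(B + Mp + 2) with hLdef
  set lo : ℝ := L - 1 with hlodef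
  set hi : ℝ := Mp + 1 with hhidef
  set M₀ : ℝ := B + Mp + 3 with hM₀def
  have hlohi : lo ≤ hi := by simp only [hlodef, hhidef, hLdef]; linarith
  set proj : ℝ → ℝ := fun x => max lo (min x hi) with hprojdef
  set Fv : ℝ → ℝ → ℝ := fun t x => (proj x) ^ 2 + γ t with hFvdef
  have hproj_lo : ∀ x, lo ≤ proj x := fun x => le_max_left _ _
  have hproj_hi : ∀ x, proj x ≤ hi := fun x => max_le hlohi (min_le_right _ _)
  have hproj_abs : ∀ x, |proj x| ≤ M₀ := by
    intro x
    rw [abs_le]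
    constructor
    · have := hproj_lo x; simp only [hlodef, hLdef, hM₀def] at *; linarith
    · have := hproj_hi x; simp only [hhidef, hM₀def] at *; linarith
  have hproj_eq : ∀ x, lo ≤ x → x ≤ hi → proj x = x := by
    intro x h1 h2
    simp only [hprojdef]
    rw [min_eq_left h2, max_eq_right h1]
  have hproj_lip : ∀ x y, |proj x - proj y| ≤ |x - y| := by
    intro x y
    calc |max lo (min x hi) - max lo (min y hi)|
        = |max (min x hi) lo - max (min y hi) lo| := by rw [max_comm, max_comm lo]
      _ ≤ |min x hi - min y hi| := abs_max_sub_max_le_abs _ _ _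
      _ ≤ max |x - y| |hi - hi| := abs_min_sub_min_le_max _ _ _ _
      _ = |x - y| := by simp
  have hM₀0 : 0 < M₀ := by simp only [hM₀def]; linarith
  have hFv_lip : ∀ t x y, |Fv t x - Fv t y| ≤ 2 * M₀ * |x - y| := by
    intro t x y
    have h1 : Fv t x - Fv t y = (proj x + proj y) * (proj x - proj y) := by
      simp only [hFvdef]; ring
    rw [h1, abs_mul]
    have h2 : |proj x + proj y| ≤ 2 * M₀ := by
      calc |proj x + proj y| ≤ |proj x| + |proj y| := abs_add_le _ _
        _ ≤ 2 * M₀ := by have := hproj_abs x; have := hproj_abs y; linarith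
    exact mul_le_mul h2 (hproj_lip x y) (abs_nonneg _) (by linarith)
  obtain ⟨K, hKcoe⟩ : ∃ K : NNReal, (K : ℝ) = 2 * M₀ :=
    ⟨⟨2 * M₀, by positivity⟩, rfl⟩
  have hFlip : ∀ t, LipschitzWith K (Fv t) := by
    intro t
    apply LipschitzWith.of_dist_le_mul
    intro x y
    rw [Real.dist_eq, Real.dist_eq, hKcoe]
    exact hFv_lip t x y
  set C : ℝ := M₀ ^ 2 + Γ with hCdef
  have hC0 : 0 ≤ C := by positivity
  have hCb : ∀ t x, |Fv t x| ≤ C := by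
    intro t x
    calc |Fv t x| ≤ |(proj x) ^ 2| + |γ t| := abs_add_le _ _
      _ ≤ M₀ ^ 2 + Γ := by
          refine add_le_add ?_ (hΓ t)
          rw [abs_pow, ← sq_abs]
          · exact pow_le_pow_left₀ (abs_nonneg _) (by simpa using hproj_abs x) 2
  set R : ℝ := C * T with hRdef
  -- Existence of solutions on [0, T]
  have hsol : ∀ a : ℝ, ∃ f : ℝ → ℝ, f 0 = a ∧
      ∀ t ∈ Icc 0 T, HasDerivWithinAt f (Fv t (f t)) (Icc 0 T) t := by
    intro a
    refine IsPicardLindelof.exists_eq_forall_mem_Icc_hasDerivWithinAt₀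
      (t₀ := (⟨0, le_rfl, hT.le⟩ : Icc (0:ℝ) T)) (a := ⟨R, by positivity⟩)
      (⟨fun t _ => (hFlip t).lipschitzOnWith,
        fun x _ => (continuous_const.add hγc).continuousOn,
        fun t _ x _ => by rw [Real.norm_eq_abs]; exact hCb t x, ?_⟩ :
        IsPicardLindelof Fv (⟨0, le_rfl, hT.le⟩ : Icc (0:ℝ) T) a ⟨R, by positivity⟩ 0
          ⟨C, hC0⟩ K)
    show C * max (T - 0) (0 - 0) ≤ R - 0
    rw [sub_zero, sub_zero, sub_zero, max_eq_left hT.le]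
  choose sol hsol0 hsolD using hsol
  have hcontOn : ∀ a, ContinuousOn (sol a) (Icc 0 T) :=
    fun a t ht => (hsolD a t ht).continuousWithinAt
  have hIci : ∀ a, ∀ t ∈ Ico 0 T, HasDerivWithinAt (sol a) (Fv t (sol a t)) (Ici t) t := by
    intro a t ht
    have h1 := (hsolD a t ⟨ht.1, ht.2.le⟩).mono (Icc_subset_Icc ht.1 le_rfl)
    have hmem : Icc t T ∈ 𝓝[Ici t] t := by
      rw [← nhdsWithin_Icc_eq_nhdsGE ht.2]; exact self_mem_nhdsWithin
    exact h1.mono_of_mem_nhdsWithin hmem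
  have hploq : ∀ t, lo ≤ p t ∧ p t ≤ hi := by
    intro t
    have := abs_le.mp (hMp t)
    constructor
    · simp only [hlodef, hLdef]; linarith
    · simp only [hhidef]; linarith
  have hL2 : ∀ t, (1:ℝ) ≤ L ^ 2 + γ t := by
    intro t
    have h1 := (abs_le.mp (hΓ t)).1
    have h2 : L ^ 2 = (B + Mp + 2) ^ 2 := by simp only [hLdef]; ring
    nlinarith
  have hLlohi : lo ≤ L ∧ L ≤ hi := by
    constructor
    · simp only [hlodef]; linarith
    · simp only [hlodef, hhidef, hLdef]; linarith
  -- lower barrier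
  have hlow : ∀ a, L ≤ a → ∀ t ∈ Icc 0 T, L ≤ sol a t := by
    intro a hal
    have h := barrier_nonneg (T := T) (g := fun t => sol a t - L)
      ((hcontOn a).sub continuousOn_const)
      (by show (0:ℝ) ≤ sol a 0 - L; rw [hsol0 a]; exact sub_nonneg.mpr hal) ?_
    · intro t ht
      linarith [show (0:ℝ) ≤ sol a t - L from h t ht]
    · intro t ht heq
      have hsolL : sol a t = L := by linarith [sub_eq_zero.mp heq]
      refine ⟨Fv t (sol a t), ?_, (hsolD a t ht).sub_const _⟩
      rw [hsolL]
      have : Fv t L = L ^ 2 + γ t := by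
        simp only [hFvdef]
        rw [hproj_eq L hLlohi.1 hLlohi.2]
      rw [this]
      linarith [hL2 t]
  -- upper barrier (weak and strict)
  have hupcontact : ∀ a, ∀ t ∈ Icc 0 T, (fun t => p t - sol a t) t = 0 →
      ∃ d, 0 < d ∧ HasDerivWithinAt (fun t => p t - sol a t) d (Icc 0 T) t := by
    intro a t ht heq
    have hpe : p t = sol a t := by linarith [sub_eq_zero.mp heq]
    refine ⟨deriv p t - Fv t (sol a t), ?_,
      ((hp.differentiable one_ne_zero t).hasDerivAt.hasDerivWithinAt).sub (hsolD a t ht)⟩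
    have : Fv t (sol a t) = p t ^ 2 + γ t := by
      rw [← hpe]
      simp only [hFvdef]
      rw [hproj_eq (p t) (hploq t).1 (hploq t).2]
    rw [this]
    linarith [hineq t]
  have hup : ∀ a, a ≤ p 0 → ∀ t ∈ Icc 0 T, sol a t ≤ p t := by
    intro a hau t ht
    have h := barrier_nonneg (T := T) (g := fun t => p t - sol a t)
      ((hp.continuous.continuousOn).sub (hcontOn a))
      (by show (0:ℝ) ≤ p 0 - sol a 0; rw [hsol0 a]; exact sub_nonneg.mpr hau) (hupcontact a) t ht
    linarith [show (0:ℝ) ≤ p t - sol a t from h]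
  have hstrict : ∀ a, a ≤ p 0 → ∀ t ∈ Icc 0 T, t ≠ 0 → sol a t < p t := by
    intro a hau t ht htne
    have h := barrier_pos (T := T) (g := fun t => p t - sol a t)
      (fun u hu => sub_nonneg.mpr (hup a hau u hu)) (hupcontact a) t ht htne
    linarith [show (0:ℝ) < p t - sol a t from h]
  -- continuity of the Poincaré map
  have hlipT : ∀ a b : ℝ, dist (sol a T) (sol b T) ≤ dist a b * Real.exp (K * T) := by
    intro a b
    have h := dist_le_of_trajectories_ODE (v := Fv) hFlip (hcontOn a) (hIci a)
      (hcontOn b) (hIci b) (le_of_eq (by rw [hsol0 a, hsol0 b])) T ⟨hT.le, le_rfl⟩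
    simpa using h
  have hPcont : Continuous fun a => sol a T := by
    rw [Metric.continuous_iff]
    intro b ε hε
    refine ⟨ε / Real.exp (K * T), by positivity, fun a hab => ?_⟩
    calc dist (sol a T) (sol b T) ≤ dist a b * Real.exp (K * T) := hlipT a b
      _ < (ε / Real.exp (K * T)) * Real.exp (K * T) :=
          mul_lt_mul_of_pos_right hab (Real.exp_pos _)
      _ = ε := div_mul_cancel₀ _ (Real.exp_pos _).ne'
  -- IVT for the fixed point
  have hLp0 : L ≤ p 0 := by
    have := (abs_le.mp (hMp 0)).1
    simp only [hLdef]; linarith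
  have hgc : ContinuousOn (fun a => sol a T - a) (Icc L (p 0)) :=
    (hPcont.sub continuous_id).continuousOn
  have hgl : 0 ≤ sol L T - L := sub_nonneg.mpr (hlow L le_rfl T ⟨hT.le, le_rfl⟩)
  have hpT : p T = p 0 := by have := hpper 0; rwa [zero_add] at this
  have hgp : sol (p 0) T - p 0 < 0 := by
    have := hstrict (p 0) le_rfl T ⟨hT.le, le_rfl⟩ hT.ne'
    rw [hpT] at this
    linarith
  obtain ⟨astar, haI, hga⟩ := intermediate_value_Icc' hLp0 hgc
    (show (0:ℝ) ∈ Icc (sol (p 0) T - p 0) (sol L T - L) from ⟨hgp.le, hgl⟩)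
  have hfix : sol astar T = astar := by
    have h2 : sol astar T - astar = 0 := hga
    linarith
  have hastar_lt : astar < p 0 := by
    rcases haI.2.eq_or_lt with h | h
    · exfalso
      have h1 := hstrict (p 0) le_rfl T ⟨hT.le, le_rfl⟩ hT.ne'
      rw [hpT, ← h] at h1
      rw [hfix] at h1  -- unused? careful
      exact absurd h1 (lt_irrefl _)
    · exact h
  -- periodic extension
  set xs := sol astar with hxsdef
  have hxs0 : xs 0 = astar := hsol0 astar
  have hxsD : ∀ t ∈ Icc 0 T, HasDerivWithinAt xs (Fv t (xs t)) (Icc 0 T) t := hsolD astar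
  set φ : ℝ → ℝ := fun t => xs (t - T * ⌊t / T⌋) with hφdef
  have hfloor0 : ∀ s : ℝ, 0 ≤ s → s < T → (⌊s / T⌋ : ℤ) = 0 := by
    intro s h1 h2
    rw [Int.floor_eq_zero_iff]
    constructor
    · exact div_nonneg h1 hT.le
    · rw [div_lt_one hT]; exact h2
  have hφs : ∀ s : ℝ, 0 ≤ s → s < T → φ s = xs s := by
    intro s h1 h2
    simp only [hφdef, hfloor0 s h1 h2]
    norm_num
  have hφper : Function.Periodic φ T := by
    intro t
    simp only [hφdef]
    have h1 : (t + T) / T = t / T + 1 := by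
      rw [add_div, div_self hT.ne']
    rw [h1, Int.floor_add_one]
    push_cast
    ring_nf
  have hφ0 : φ 0 = astar := by rw [hφs 0 le_rfl hT]; exact hsol0 astar
  have hφeqIcc : EqOn φ xs (Icc 0 T) := by
    intro s hs
    rcases hs.2.eq_or_lt with h | h
    · subst h
      have h2 := hφper 0
      rw [zero_add] at h2
      rw [h2, hφ0, hfix]
    · exact hφs s hs.1 h
  have hγT : γ T = γ 0 := by have := hγp 0; rwa [zero_add] at this
  -- derivative on [0, T)
  have hmain : ∀ s : ℝ, 0 ≤ s → s < T → HasDerivAt φ (Fv s (φ s)) s := by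
    intro s h0s hsT
    rcases h0s.eq_or_lt with h | h
    · -- s = 0 : gluing
      subst h
      have d₀eq : Fv T astar = Fv 0 astar := by simp only [hFvdef, hγT]
      -- right derivative
      have hr : HasDerivWithinAt φ (Fv 0 astar) (Ici 0) 0 := by
        have h1 := hxsD 0 ⟨le_rfl, hT.le⟩
        rw [hxs0] at h1
        have h2 : HasDerivWithinAt φ (Fv 0 astar) (Icc 0 T) 0 :=
          h1.congr hφeqIcc (hφeqIcc ⟨le_rfl, hT.le⟩)
        have hmem : Icc (0:ℝ) T ∈ 𝓝[Ici 0] 0 := by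
          rw [← nhdsWithin_Icc_eq_nhdsGE hT]; exact self_mem_nhdsWithin
        exact h2.mono_of_mem_nhdsWithin hmem
      -- left derivative
      have hl : HasDerivWithinAt φ (Fv 0 astar) (Iic 0) 0 := by
        have h2 : HasDerivWithinAt xs (Fv T astar) (Icc 0 T) T := by
          have := hxsD T ⟨hT.le, le_rfl⟩
          rwa [hfix] at this
        have hg : HasDerivWithinAt (fun u : ℝ => u + T) 1 (Icc (-T) 0) 0 :=
          ((hasDerivAt_id (0:ℝ)).add_const T).hasDerivWithinAt
        have hmaps : MapsTo (fun u : ℝ => u + T) (Icc (-T) 0) (Icc 0 T) := by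
          intro u hu
          simp only [mem_Icc] at hu ⊢
          constructor <;> linarith
        have h2' : HasDerivWithinAt xs (Fv T astar) (Icc 0 T) ((fun u : ℝ => u + T) 0) := by
          simpa using h2
        have hcomp := HasDerivWithinAt.comp (0:ℝ) h2' hg hmaps
        have heq : EqOn φ (xs ∘ fun u : ℝ => u + T) (Icc (-T) 0) := by
          intro u hu
          rcases hu.2.eq_or_lt with h | h
          · subst h  -- careful: h : u = 0
            simp only [Function.comp, zero_add]
            rw [hφ0, hfix]
          · have h3 : φ u = φ (u + T) := (hφper u).symm
            rw [h3]
            simp only [Function.comp]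
            exact hφs (u + T) (by linarith [hu.1]) (by linarith)
        have h4 : HasDerivWithinAt φ (Fv T astar * 1) (Icc (-T) 0) 0 :=
          hcomp.congr heq (by simp only [Function.comp, zero_add]; rw [hφ0, hfix])
        have hmem : Icc (-T) (0:ℝ) ∈ 𝓝[Iic 0] 0 := by
          rw [← nhdsWithin_Icc_eq_nhdsLE (by linarith : -T < 0)]
          exact self_mem_nhdsWithin
        have h5 := h4.mono_of_mem_nhdsWithin hmem
        rw [mul_one, d₀eq] at h5
        exact h5
      have h6 := hl.union hr
      rw [Iic_union_Ici] at h6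
      have h7 := hasDerivWithinAt_univ.mp h6
      rwa [hφ0]
    · -- interior point
      have hmem : Icc (0:ℝ) T ∈ 𝓝 s := Icc_mem_nhds h hsT
      have hx : HasDerivAt xs (Fv s (xs s)) s := (hxsD s ⟨h.le, hsT.le⟩).hasDerivAt hmem
      have hev : φ =ᶠ[𝓝 s] xs := by
        filter_upwards [Ioo_mem_nhds h hsT] with u hu
        exact hφs u hu.1.le hu.2
      have h8 := hx.congr_of_eventuallyEq hev
      rwa [hφs s h.le hsT]
  -- decomposition of an arbitrary time
  have hdec : ∀ t : ℝ, ∃ s : ℝ, 0 ≤ s ∧ s < T ∧ φ t = φ s ∧ p t = p s ∧ γ t = γ s ∧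
      HasDerivAt φ (Fv t (φ t)) t := by
    intro t
    set n : ℤ := ⌊t / T⌋ with hndef
    set s : ℝ := t - T * n with hsdef
    have hs0 : 0 ≤ s := by
      have := Int.sub_floor_div_mul_nonneg t hT
      simp only [hsdef, hndef]
      linarith [this]
    have hsT : s < T := by
      have := Int.sub_floor_div_mul_lt t hT
      simp only [hsdef, hndef]
      linarith [this]
    have hts : t = s + n * T := by simp only [hsdef]; ring
    have hφts : φ t = φ s := by
      have := (hφper.int_mul n) s
      rw [← hts] at this
      exact this
    have hpts : p t = p s := by
      have := (hpper.int_mul n) s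
      rw [← hts] at this
      exact this
    have hγts : γ t = γ s := by
      have := (hγp.int_mul n) s
      rw [← hts] at this
      exact this
    refine ⟨s, hs0, hsT, hφts, hpts, hγts, ?_⟩
    -- shift the derivative
    have hder := hmain s hs0 hsT
    have hθ : HasDerivAt (fun u : ℝ => u - n * T) 1 t := by
      simpa using (hasDerivAt_id t).sub_const ((n : ℝ) * T)
    have hθt : (fun u : ℝ => u - n * T) t = s := by rw [hts]; ring
    have hder' : HasDerivAt φ (Fv s (φ s)) ((fun u : ℝ => u - n * T) t) := by rwa [hθt]
    have hcomp := HasDerivAt.comp t hder' hθ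
    have hfeq : (φ ∘ fun u : ℝ => u - n * T) = φ := by
      funext u
      simp only [Function.comp]
      have h1 := (hφper.int_mul (-n)) u
      push_cast at h1
      rw [show u + -(n:ℝ) * T = u - n * T by ring] at h1
      exact h1
    rw [hfeq, mul_one] at hcomp
    rw [hφts, hpts] at *
    rw [show Fv t (φ s) = Fv s (φ s) by simp only [hFvdef, hγts]]
    exact hcomp
  -- range bounds
  have hrange : ∀ t, L ≤ φ t ∧ φ t < p t := by
    intro t
    obtain ⟨s, hs0, hsT, hφts, hpts, hγts, _⟩ := hdec t
    rw [hφts, hpts]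
    rw [hφs s hs0 hsT]
    constructor
    · exact hlow astar haI.1 s ⟨hs0, hsT.le⟩

    · rcases hs0.eq_or_lt with h | h
      · rw [← h, hxs0]
        exact hastar_lt
      · exact hstrict astar haI.2 s ⟨hs0, hsT.le⟩ (ne_of_gt h)
  refine ⟨φ, ?_, hφper, fun t => (hrange t).2⟩
  intro t
  obtain ⟨s, hs0, hsT, hφts, hpts, hγts, hder⟩ := hdec t
  have hFveq : Fv t (φ t) = φ t ^ 2 + γ t := by
    simp only [hFvdef]
    rw [hproj_eq (φ t) ?_ ?_]
    · have := (hrange t).1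
      simp only [hlodef]
      linarith
    · have h1 := (hrange t).2
      have h2 := (abs_le.mp (hMp t)).2
      simp only [hhidef]
      linarith
  rwa [hFveq] at hder
theorem stmt_7 (T : ℝ) (hT : 0 < T) (γ : ℝ → ℝ) (hγc : Continuous γ)
    (hγp : Function.Periodic γ T)
    (p : ℝ → ℝ) (hp : ContDiff ℝ 1 p) (hpper : Function.Periodic p T)
    (hineq : ∀ t, deriv p t > p t ^ 2 + γ t) :
    ∃ φm φp : ℝ → ℝ,
      (∀ t, HasDerivAt φm (φm t ^ 2 + γ t) t) ∧ Function.Periodic φm T ∧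
      (∀ t, HasDerivAt φp (φp t ^ 2 + γ t) t) ∧ Function.Periodic φp T ∧
      (∀ t, φm t < p t ∧ p t < φp t) ∧
      (∫ t in (0:ℝ)..T, φm t) < 0 ∧ 0 < (∫ t in (0:ℝ)..T, φp t) ∧
      (∀ χ : ℝ → ℝ, (∀ t, HasDerivAt χ (χ t ^ 2 + γ t) t) → Function.Periodic χ T →
        χ = φm ∨ χ = φp) := by
  obtain ⟨φm, hφmD, hφmP, hφmlt⟩ := riccati_lower T hT γ hγc hγp p hp hpper hineq
  -- the reflected problem
  set γ' : ℝ → ℝ := fun t => γ (-t) with hγ'def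
  set p' : ℝ → ℝ := fun t => -p (-t) with hp'def
  have hγ'c : Continuous γ' := hγc.comp continuous_neg
  have hγ'p : Function.Periodic γ' T := by
    intro t
    simp only [hγ'def]
    rw [show -(t + T) = -t - T by ring, hγp.sub_eq]
  have hp'c : ContDiff ℝ 1 p' := (hp.comp contDiff_neg).neg
  have hp'per : Function.Periodic p' T := by
    intro t
    simp only [hp'def]
    rw [show -(t + T) = -t - T by ring, hpper.sub_eq]
  have hpderiv : ∀ t, HasDerivAt p (deriv p t) t :=
    fun t => (hp.differentiable one_ne_zero t).hasDerivAt
  have hp'deriv : ∀ t, HasDerivAt p' (deriv p (-t)) t := by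
    intro t
    have h1 : HasDerivAt p (deriv p (-t)) (-t) := hpderiv (-t)
    have h2 : HasDerivAt (fun u : ℝ => p (-u)) (deriv p (-t) * (-1)) t :=
      HasDerivAt.comp t (by simpa using h1) (hasDerivAt_neg t)
    have h3 := h2.neg
    refine h3.congr_deriv ?_
    ring
  have hineq' : ∀ t, deriv p' t > p' t ^ 2 + γ' t := by
    intro t
    rw [(hp'deriv t).deriv]
    have h := hineq (-t)
    simp only [hp'def, hγ'def, neg_sq]
    exact h
  obtain ⟨ψ, hψD, hψP, hψlt⟩ := riccati_lower T hT γ' hγ'c hγ'p p' hp'c hp'per hineq'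
  set φp : ℝ → ℝ := fun t => -ψ (-t) with hφpdef
  have hφpD : ∀ t, HasDerivAt φp (φp t ^ 2 + γ t) t := by
    intro t
    have h1 := hψD (-t)
    have h2 : HasDerivAt (fun u : ℝ => ψ (-u)) ((ψ (-t) ^ 2 + γ' (-t)) * (-1)) t :=
      HasDerivAt.comp t h1 (hasDerivAt_neg t)
    have h3 := h2.neg
    have h4 : γ' (-t) = γ t := by simp only [hγ'def, neg_neg]
    refine h3.congr_deriv ?_
    simp only [hφpdef, h4, neg_sq]
    ring
  have hφpP : Function.Periodic φp T := by
    intro t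
    simp only [hφpdef]
    rw [show -(t + T) = -t - T by ring, hψP.sub_eq]
  have hφpgt : ∀ t, p t < φp t := by
    intro t
    have h := hψlt (-t)
    simp only [hp'def, neg_neg] at h
    simp only [hφpdef]
    linarith
  -- continuity facts
  have hφmc : Continuous φm := continuous_iff_continuousAt.mpr fun t => (hφmD t).continuousAt
  have hφpc : Continuous φp := continuous_iff_continuousAt.mpr fun t => (hφpD t).continuousAt
  have hpc : Continuous p := hp.continuous
  have hdpc : Continuous (deriv p) := hp.continuous_deriv le_rfl
  have hpT : p T = p 0 := by have := hpper 0; rwa [zero_add] at this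
  have hφmT : φm T = φm 0 := by have := hφmP 0; rwa [zero_add] at this
  have hφpT : φp T = φp 0 := by have := hφpP 0; rwa [zero_add] at this
  -- integral inequalities
  have hIm : (∫ t in (0:ℝ)..T, (p t + φm t)) < 0 :=
    int_lt_of_logderiv hT (v := fun t => p t - φm t)
      (v' := fun t => deriv p t - (φm t ^ 2 + γ t)) (e := fun t => p t + φm t)
      (fun t => (hpderiv t).sub (hφmD t))
      (hdpc.sub ((hφmc.pow 2).add hγc)) (hpc.add hφmc)
      (fun t => sub_pos.mpr (hφmlt t))
      (by show p T - φm T = p 0 - φm 0; rw [hpT, hφmT])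
      (fun t => by
        show (p t + φm t) * (p t - φm t) < deriv p t - (φm t ^ 2 + γ t)
        nlinarith [hineq t])
  have hIp : 0 < ∫ t in (0:ℝ)..T, (p t + φp t) :=
    int_gt_of_logderiv hT (v := fun t => φp t - p t)
      (v' := fun t => (φp t ^ 2 + γ t) - deriv p t) (e := fun t => p t + φp t)
      (fun t => (hφpD t).sub (hpderiv t))
      (((hφpc.pow 2).add hγc).sub hdpc) (hpc.add hφpc)
      (fun t => sub_pos.mpr (hφpgt t))
      (by show φp T - p T = φp 0 - p 0; rw [hpT, hφpT])
      (fun t => by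
        show (φp t ^ 2 + γ t) - deriv p t < (p t + φp t) * (φp t - p t)
        nlinarith [hineq t])
  have hI0 : (∫ t in (0:ℝ)..T, (φm t + φp t)) = 0 :=
    int_eq_zero_of_logderiv hφmD hφpD (fun t => ne_of_gt ((hφmlt t).trans (hφpgt t)))
      hφmP hφpP
  have hsplit1 : (∫ t in (0:ℝ)..T, (p t + φm t))
      = (∫ t in (0:ℝ)..T, p t) + ∫ t in (0:ℝ)..T, φm t :=
    intervalIntegral.integral_add (hpc.intervalIntegrable _ _) (hφmc.intervalIntegrable _ _)
  have hsplit2 : (∫ t in (0:ℝ)..T, (p t + φp t))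
      = (∫ t in (0:ℝ)..T, p t) + ∫ t in (0:ℝ)..T, φp t :=
    intervalIntegral.integral_add (hpc.intervalIntegrable _ _) (hφpc.intervalIntegrable _ _)
  have hsplit3 : (∫ t in (0:ℝ)..T, (φm t + φp t))
      = (∫ t in (0:ℝ)..T, φm t) + ∫ t in (0:ℝ)..T, φp t :=
    intervalIntegral.integral_add (hφmc.intervalIntegrable _ _) (hφpc.intervalIntegrable _ _)
  have hAneg : (∫ t in (0:ℝ)..T, φm t) < 0 := by linarith
  have hBpos : 0 < ∫ t in (0:ℝ)..T, φp t := by linarith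
  -- uniqueness of periodic solutions through a common point
  have huniq : ∀ f g : ℝ → ℝ, (∀ t, HasDerivAt f (f t ^ 2 + γ t) t) →
      (∀ t, HasDerivAt g (g t ^ 2 + γ t) t) → Function.Periodic f T →
      Function.Periodic g T → (∃ t₀, f t₀ = g t₀) → f = g := by
    rintro f g hf hg hfP hgP ⟨t₀, ht₀⟩
    have hfc : Continuous f := continuous_iff_continuousAt.mpr fun t => (hf t).continuousAt
    have hgc : Continuous g := continuous_iff_continuousAt.mpr fun t => (hg t).continuousAt
    obtain ⟨Mf, hMf0, hMf⟩ := per_bound hT hfc hfP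
    obtain ⟨Mg, hMg0, hMg⟩ := per_bound hT hgc hgP
    set Rb : ℝ := Mf + Mg + 1 with hRbdef
    have hRb0 : 0 < Rb := by linarith
    obtain ⟨KR, hKRcoe⟩ : ∃ KR : NNReal, (KR : ℝ) = 2 * Rb :=
      ⟨⟨2 * Rb, by positivity⟩, rfl⟩
    have hv : ∀ t, LipschitzOnWith KR (fun x => x ^ 2 + γ t) (Icc (-Rb) Rb) := by
      intro t
      apply LipschitzOnWith.of_dist_le_mul
      intro x hx y hy
      rw [Real.dist_eq, Real.dist_eq, hKRcoe]
      have h1 : x ^ 2 + γ t - (y ^ 2 + γ t) = (x + y) * (x - y) := by ring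
      rw [h1, abs_mul]
      have hxb := abs_le.mp (abs_le.mpr ⟨hx.1, hx.2⟩)
      have hyb := abs_le.mp (abs_le.mpr ⟨hy.1, hy.2⟩)
      have h2 : |x + y| ≤ 2 * Rb := by
        calc |x + y| ≤ |x| + |y| := abs_add_le _ _
          _ ≤ 2 * Rb := by
              have := abs_le.mpr ⟨hx.1, hx.2⟩
              have := abs_le.mpr ⟨hy.1, hy.2⟩
              linarith
      exact mul_le_mul h2 le_rfl (abs_nonneg _) (by linarith)
    funext u
    have hab : t₀ ∈ Ioo (min u t₀ - 1) (max u t₀ + 1) := by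
      constructor
      · have := min_le_right u t₀; linarith
      · have := le_max_right u t₀; linarith
    have hmemf : ∀ t ∈ Ioo (min u t₀ - 1) (max u t₀ + 1), f t ∈ Icc (-Rb) Rb := by
      intro t _
      have := abs_le.mp (hMf t)
      exact ⟨by linarith, by linarith⟩
    have hmemg : ∀ t ∈ Ioo (min u t₀ - 1) (max u t₀ + 1), g t ∈ Icc (-Rb) Rb := by
      intro t _
      have := abs_le.mp (hMg t)
      exact ⟨by linarith, by linarith⟩
    have heqon := ODE_solution_unique_of_mem_Icc (fun t _ => hv t) hab hfc.continuousOn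
      (fun t _ => hf t) hmemf hgc.continuousOn (fun t _ => hg t) hmemg ht₀
    exact heqon ⟨by have := min_le_left u t₀; linarith, by have := le_max_left u t₀; linarith⟩
  refine ⟨φm, φp, hφmD, hφmP, hφpD, hφpP, fun t => ⟨hφmlt t, hφpgt t⟩, hAneg, hBpos, ?_⟩
  intro χ hχD hχP
  by_cases hm : ∃ t₀, χ t₀ = φm t₀
  · exact Or.inl (huniq χ φm hχD hφmD hχP hφmP hm)
  by_cases hq : ∃ t₀, χ t₀ = φp t₀
  · exact Or.inr (huniq χ φp hχD hφpD hχP hφpP hq)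
  exfalso
  push_neg at hm hq
  have hχc : Continuous χ := continuous_iff_continuousAt.mpr fun t => (hχD t).continuousAt
  have e1 : (∫ t in (0:ℝ)..T, (χ t + φm t)) = 0 :=
    int_eq_zero_of_logderiv hχD hφmD (fun t => fun h => hm t h.symm) hχP hφmP
  have e2 : (∫ t in (0:ℝ)..T, (χ t + φp t)) = 0 :=
    int_eq_zero_of_logderiv hχD hφpD (fun t => fun h => hq t h.symm) hχP hφpP
  have hs1 : (∫ t in (0:ℝ)..T, (χ t + φm t))
      = (∫ t in (0:ℝ)..T, χ t) + ∫ t in (0:ℝ)..T, φm t :=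
    intervalIntegral.integral_add (hχc.intervalIntegrable _ _) (hφmc.intervalIntegrable _ _)
  have hs2 : (∫ t in (0:ℝ)..T, (χ t + φp t))
      = (∫ t in (0:ℝ)..T, χ t) + ∫ t in (0:ℝ)..T, φp t :=
    intervalIntegral.integral_add (hχc.intervalIntegrable _ _) (hφpc.intervalIntegrable _ _)
  linarith
end

section
/- Let γ: ℝ → ℝ be a continuous T-periodic function and let μ₁ < μ₂ be real numbers. Suppose that for i = 1, 2 the equation x' = x² + γ(t) + μᵢ has two distinct T-periodic solutions φᵢ⁻ and φᵢ⁺ with φᵢ⁻(t) < φᵢ⁺(t) for all t. Then φ₁⁻(t) < φ₂⁻(t) < φ₂⁺(t) < φ₁⁺(t) for all t ∈ ℝ. In particular, the initial value φ⁻(0,μ) of the lower (stable) T-periodic solution is strictly increasing in μ and the initial value φ⁺(0,μ) of the upper (unstable) T-periodic solution is strictly decreasing in μ. -/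
open intervalIntegral

private lemma contOfDeriv {f g : ℝ → ℝ} (h : ∀ t, HasDerivAt f (g t) t) : Continuous f :=
  continuous_iff_continuousAt.mpr fun t => (h t).continuousAt

/-- If `w' = a w + c` with `c > 0` and `w t₀ ≥ 0`, then `w t₁ > 0` for `t₁ > t₀`. -/
private lemma prop_pos {a w : ℝ → ℝ} {c : ℝ} (ha : Continuous a)
    (hd : ∀ t, HasDerivAt w (a t * w t + c) t) (hc : 0 < c)
    {t₀ t₁ : ℝ} (h01 : t₀ < t₁) (h0 : 0 ≤ w t₀) : 0 < w t₁ := by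
  set A : ℝ → ℝ := fun t => ∫ s in t₀..t, a s with hA
  have hAd : ∀ t, HasDerivAt A (a t) t := by
    intro t
    exact intervalIntegral.integral_hasDerivAt_right (ha.intervalIntegrable t₀ t)
      ha.aestronglyMeasurable.stronglyMeasurableAtFilter ha.continuousAt
  set g : ℝ → ℝ := fun t => w t * Real.exp (-A t) with hg
  have hgd : ∀ t, HasDerivAt g (c * Real.exp (-A t)) t := by
    intro t
    have hE : HasDerivAt (fun t => Real.exp (-A t)) (Real.exp (-A t) * (-a t)) t :=
      ((hAd t).neg).exp
    have := (hd t).mul hE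
    refine this.congr_deriv ?_
    ring
  have hmono : StrictMono g := by
    apply strictMono_of_deriv_pos
    intro t
    rw [(hgd t).deriv]
    positivity
  have h1 : g t₀ < g t₁ := hmono h01
  have h2 : 0 ≤ g t₀ := mul_nonneg h0 (Real.exp_pos _).le
  have h3 : 0 < w t₁ * Real.exp (-A t₁) := lt_of_le_of_lt h2 h1
  nlinarith [Real.exp_pos (-A t₁)]

/-- If `δ > 0` is `T`-periodic with `δ' = b δ`, `b` continuous, then `∫₀ᵀ b = 0`. -/
private lemma integral_b_zero {T : ℝ} {δ b : ℝ → ℝ} (hb : Continuous b)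
    (hδpos : ∀ t, 0 < δ t) (hδp : Function.Periodic δ T)
    (hd : ∀ t, HasDerivAt δ (b t * δ t) t) : (∫ t in (0:ℝ)..T, b t) = 0 := by
  have hL : ∀ t, HasDerivAt (fun s => Real.log (δ s)) (b t) t := by
    intro t
    have h := (hd t).log (ne_of_gt (hδpos t))
    rwa [mul_div_assoc, div_self (hδpos t).ne', mul_one] at h
  have key := intervalIntegral.integral_eq_sub_of_hasDerivAt
    (f := fun s => Real.log (δ s)) (f' := b) (a := (0:ℝ)) (b := T)
    (fun t _ => hL t) (hb.intervalIntegrable 0 T)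
  have hTδ : δ T = δ 0 := by simpa using hδp 0
  rw [key]
  simp [hTδ]

/-- For two ordered periodic solutions of the same Riccati equation,
`∫ p > 0` and `∫ m < 0`. -/
private lemma integral_signs {T μ : ℝ} (hT : 0 < T) {γ m p : ℝ → ℝ}
    (hmd : ∀ t, HasDerivAt m (m t ^ 2 + γ t + μ) t) (hmp : Function.Periodic m T)
    (hpd : ∀ t, HasDerivAt p (p t ^ 2 + γ t + μ) t) (hpp : Function.Periodic p T)
    (hord : ∀ t, m t < p t) :
    (0 < ∫ t in (0:ℝ)..T, p t) ∧ (∫ t in (0:ℝ)..T, m t) < 0 := by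
  have hmc : Continuous m := contOfDeriv hmd
  have hpc : Continuous p := contOfDeriv hpd
  have hsum0 : (∫ t in (0:ℝ)..T, (m t + p t)) = 0 := by
    apply integral_b_zero (δ := fun t => p t - m t) (hmc.add hpc)
      (fun t => sub_pos.mpr (hord t)) (hpp.sub hmp)
    intro t
    have := (hpd t).sub (hmd t)
    refine this.congr_deriv ?_
    simp only [Pi.add_apply]
    ring
  have hdiffpos : 0 < ∫ t in (0:ℝ)..T, (p t - m t) := by
    apply intervalIntegral.intervalIntegral_pos_of_pos
      ((hpc.sub hmc).intervalIntegrable 0 T) (fun t => sub_pos.mpr (hord t)) hT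
  rw [intervalIntegral.integral_add (hmc.intervalIntegrable 0 T)
    (hpc.intervalIntegrable 0 T)] at hsum0
  rw [intervalIntegral.integral_sub (hpc.intervalIntegrable 0 T)
    (hmc.intervalIntegrable 0 T)] at hdiffpos
  constructor <;> linarith

/-- Dichotomy: a periodic solution for `μ₁` and one for `μ₂ > μ₁` are globally ordered. -/
private lemma cross_lt {T μ₁ μ₂ : ℝ} (hT : 0 < T) (hμ : μ₁ < μ₂) {γ u v : ℝ → ℝ}
    (hud : ∀ t, HasDerivAt u (u t ^ 2 + γ t + μ₁) t) (hup : Function.Periodic u T)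
    (hvd : ∀ t, HasDerivAt v (v t ^ 2 + γ t + μ₂) t) (hvp : Function.Periodic v T) :
    (∀ t, v t < u t) ∨ (∀ t, u t < v t) := by
  have huc : Continuous u := contOfDeriv hud
  have hvc : Continuous v := contOfDeriv hvd
  set w : ℝ → ℝ := fun t => v t - u t with hw
  have hwc : Continuous w := hvc.sub huc
  have hwd : ∀ t, HasDerivAt w ((u t + v t) * w t + (μ₂ - μ₁)) t := by
    intro t
    have := (hvd t).sub (hud t)
    refine this.congr_deriv ?_
    simp only [hw]
    ring
  have hwp : Function.Periodic w T := hvp.sub hup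
  have hne : ∀ t, w t ≠ 0 := by
    intro t ht
    have hpos : 0 < w (t + T) :=
      prop_pos (huc.add hvc) hwd (by linarith) (by linarith) (le_of_eq ht.symm)
    rw [hwp t, ht] at hpos
    exact lt_irrefl 0 hpos
  have hsign : (∀ t, w t < 0) ∨ (∀ t, 0 < w t) := by
    rcases lt_or_gt_of_ne (hne 0) with h0 | h0
    · left
      intro t
      by_contra hle
      push_neg at hle
      have hlt : 0 < w t := lt_of_le_of_ne hle (Ne.symm (hne t))
      obtain ⟨s, -, hs⟩ := intermediate_value_uIcc (a := 0) (b := t) hwc.continuousOn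
        (Set.mem_uIcc.mpr (Or.inl ⟨h0.le, hlt.le⟩))
      exact hne s hs
    · right
      intro t
      by_contra hle
      push_neg at hle
      have hlt : w t < 0 := lt_of_le_of_ne hle (hne t)
      obtain ⟨s, -, hs⟩ := intermediate_value_uIcc (a := t) (b := 0) hwc.continuousOn
        (Set.mem_uIcc.mpr (Or.inl ⟨hlt.le, h0.le⟩))
      exact hne s hs
  rcases hsign with h | h
  · left; intro t; have := h t; simp only [hw] at this; linarith
  · right; intro t; have := h t; simp only [hw] at this; linarith

theorem stmt_8 (T : ℝ) (hT : 0 < T) (γ : ℝ → ℝ) (hγc : Continuous γ)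
    (hγp : Function.Periodic γ T)
    (μ₁ μ₂ : ℝ) (hμ : μ₁ < μ₂)
    (φ₁m φ₁p φ₂m φ₂p : ℝ → ℝ)
    (h1md : ∀ t, HasDerivAt φ₁m (φ₁m t ^ 2 + γ t + μ₁) t) (h1mp : Function.Periodic φ₁m T)
    (h1pd : ∀ t, HasDerivAt φ₁p (φ₁p t ^ 2 + γ t + μ₁) t) (h1pp : Function.Periodic φ₁p T)
    (h2md : ∀ t, HasDerivAt φ₂m (φ₂m t ^ 2 + γ t + μ₂) t) (h2mp : Function.Periodic φ₂m T)
    (h2pd : ∀ t, HasDerivAt φ₂p (φ₂p t ^ 2 + γ t + μ₂) t) (h2pp : Function.Periodic φ₂p T)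
    (horder1 : ∀ t, φ₁m t < φ₁p t) (horder2 : ∀ t, φ₂m t < φ₂p t) :
    (∀ t, φ₁m t < φ₂m t ∧ φ₂m t < φ₂p t ∧ φ₂p t < φ₁p t) ∧
    -- in particular, the initial value of the lower solution strictly increases with μ
    φ₁m 0 < φ₂m 0 ∧
    -- and the initial value of the upper solution strictly decreases with μ
    φ₂p 0 < φ₁p 0 := by
  have h1mc : Continuous φ₁m := contOfDeriv h1md
  have h1pc : Continuous φ₁p := contOfDeriv h1pd
  have h2mc : Continuous φ₂m := contOfDeriv h2md
  have h2pc : Continuous φ₂p := contOfDeriv h2pd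
  obtain ⟨hI1p, hI1m⟩ := integral_signs hT h1md h1mp h1pd h1pp horder1
  obtain ⟨hI2p, hI2m⟩ := integral_signs hT h2md h2mp h2pd h2pp horder2
  set c := μ₂ - μ₁ with hc
  have hcpos : 0 < c := by simp [hc]; linarith
  -- φ₂p < φ₁p everywhere
  have hpp' : ∀ t, φ₂p t < φ₁p t := by
    rcases cross_lt hT hμ h1pd h1pp h2pd h2pp with h | h
    · exact h
    · exfalso
      set δ : ℝ → ℝ := fun t => φ₂p t - φ₁p t with hδ
      have hδpos : ∀ t, 0 < δ t := fun t => sub_pos.mpr (h t)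
      have hδc : Continuous δ := h2pc.sub h1pc
      set b : ℝ → ℝ := fun t => (φ₁p t + φ₂p t) + c / δ t with hb
      have hbc : Continuous b :=
        (h1pc.add h2pc).add (continuous_const.div hδc fun t => (hδpos t).ne')
      have hzero : (∫ t in (0:ℝ)..T, b t) = 0 := by
        apply integral_b_zero hbc hδpos (h2pp.sub h1pp)
        intro t
        have := (h2pd t).sub (h1pd t)
        refine this.congr_deriv ?_
        have hne := (hδpos t).ne'
        simp only [hb, hδ, hc]
        simp only [hδ] at hne
        field_simp
        ring
      have hsplit : (∫ t in (0:ℝ)..T, b t) =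
          (∫ t in (0:ℝ)..T, (φ₁p t + φ₂p t)) + ∫ t in (0:ℝ)..T, c / δ t := by
        exact intervalIntegral.integral_add ((h1pc.add h2pc).intervalIntegrable 0 T)
          ((continuous_const.div hδc fun t => (hδpos t).ne').intervalIntegrable 0 T)
      have hdivpos : 0 < ∫ t in (0:ℝ)..T, c / δ t := by
        apply intervalIntegral.intervalIntegral_pos_of_pos
          ((continuous_const.div hδc fun t => (hδpos t).ne').intervalIntegrable 0 T)
          (fun t => div_pos hcpos (hδpos t)) hT
      have hsumint : (∫ t in (0:ℝ)..T, (φ₁p t + φ₂p t)) =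
          (∫ t in (0:ℝ)..T, φ₁p t) + ∫ t in (0:ℝ)..T, φ₂p t :=
        intervalIntegral.integral_add (h1pc.intervalIntegrable 0 T)
          (h2pc.intervalIntegrable 0 T)
      rw [hsplit, hsumint] at hzero
      linarith
  -- φ₁m < φ₂m everywhere
  have hmm' : ∀ t, φ₁m t < φ₂m t := by
    rcases cross_lt hT hμ h1md h1mp h2md h2mp with h | h
    · exfalso
      set δ : ℝ → ℝ := fun t => φ₁m t - φ₂m t with hδ
      have hδpos : ∀ t, 0 < δ t := fun t => sub_pos.mpr (h t)
      have hδc : Continuous δ := h1mc.sub h2mc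
      set b : ℝ → ℝ := fun t => (φ₁m t + φ₂m t) - c / δ t with hb
      have hbc : Continuous b :=
        (h1mc.add h2mc).sub (continuous_const.div hδc fun t => (hδpos t).ne')
      have hzero : (∫ t in (0:ℝ)..T, b t) = 0 := by
        apply integral_b_zero hbc hδpos (h1mp.sub h2mp)
        intro t
        have := (h1md t).sub (h2md t)
        refine this.congr_deriv ?_
        have hne := (hδpos t).ne'
        simp only [hb, hδ, hc]
        simp only [hδ] at hne
        field_simp
        ring
      have hsplit : (∫ t in (0:ℝ)..T, b t) =
          (∫ t in (0:ℝ)..T, (φ₁m t + φ₂m t)) - ∫ t in (0:ℝ)..T, c / δ t := by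
        exact intervalIntegral.integral_sub ((h1mc.add h2mc).intervalIntegrable 0 T)
          ((continuous_const.div hδc fun t => (hδpos t).ne').intervalIntegrable 0 T)
      have hdivpos : 0 < ∫ t in (0:ℝ)..T, c / δ t := by
        apply intervalIntegral.intervalIntegral_pos_of_pos
          ((continuous_const.div hδc fun t => (hδpos t).ne').intervalIntegrable 0 T)
          (fun t => div_pos hcpos (hδpos t)) hT
      have hsumint : (∫ t in (0:ℝ)..T, (φ₁m t + φ₂m t)) =
          (∫ t in (0:ℝ)..T, φ₁m t) + ∫ t in (0:ℝ)..T, φ₂m t :=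
        intervalIntegral.integral_add (h1mc.intervalIntegrable 0 T)
          (h2mc.intervalIntegrable 0 T)
      rw [hsplit, hsumint] at hzero
      linarith
    · exact h
  exact ⟨fun t => ⟨hmm' t, horder2 t, hpp' t⟩, hmm' 0, hpp' 0⟩
end

section
/- Let γ: ℝ → ℝ be a continuous T-periodic function with zero average, let q ∈ C¹_{T,0}(ℝ), and set μ := (∫₀ᵀ e^{−2∫₀ᵗ q(s) ds} dt)⁻¹ · ∫₀ᵀ e^{−2∫₀ᵗ q(s) ds} (q(t)² − γ(t)) dt. Then the equation x' = x² + γ(t) + μ has at most one T-periodic solution; moreover, if it has a T-periodic solution φ, then φ = q, and in particular φ has zero average. -/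
open intervalIntegral MeasureTheory

lemma aux_zero_on_Icc {f : ℝ → ℝ} {T : ℝ} (hT : 0 < T) (hc : Continuous f)
    (hnn : ∀ t, 0 ≤ f t) (hi : (∫ t in (0:ℝ)..T, f t) = 0) :
    ∀ t ∈ Set.Icc (0:ℝ) T, f t = 0 := by
  have hint : ∀ a b : ℝ, IntervalIntegrable f volume a b := fun a b => hc.intervalIntegrable a b
  set F : ℝ → ℝ := fun u => ∫ t in (0:ℝ)..u, f t with hFdef
  have hF0 : ∀ u ∈ Set.Icc (0:ℝ) T, F u = 0 := by
    intro u hu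
    have h1 : 0 ≤ F u := intervalIntegral.integral_nonneg hu.1 fun x _ => hnn x
    have h2 : F u + ∫ t in u..T, f t = 0 := by
      rw [← hi]; exact intervalIntegral.integral_add_adjacent_intervals (hint 0 u) (hint u T)
    have h3 : 0 ≤ ∫ t in u..T, f t := intervalIntegral.integral_nonneg hu.2 fun x _ => hnn x
    linarith
  have hIoo : Set.EqOn f 0 (Set.Ioo 0 T) := by
    intro t ht
    have hd : HasDerivAt F (f t) t :=
      intervalIntegral.integral_hasDerivAt_right (hint 0 t)
        (hc.stronglyMeasurableAtFilter _ _) hc.continuousAt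
    have hev : F =ᶠ[nhds t] fun _ => 0 := by
      filter_upwards [Ioo_mem_nhds ht.1 ht.2] with x hx
      exact hF0 x (Set.Ioo_subset_Icc_self hx)
    have hd0 : HasDerivAt F 0 t :=
      (hasDerivAt_const t (0:ℝ)).congr_of_eventuallyEq hev
    simpa using hd.unique hd0
  have hcl := hIoo.closure hc continuous_const
  rw [closure_Ioo hT.ne] at hcl
  intro t ht; exact hcl ht

theorem stmt_9 (T : ℝ) (hT : 0 < T) (γ : ℝ → ℝ) (hγc : Continuous γ)
    (hγp : Function.Periodic γ T) (hγ0 : (∫ t in (0:ℝ)..T, γ t) = 0)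
    (q : ℝ → ℝ) (hq : ContDiff ℝ 1 q) (hqper : Function.Periodic q T)
    (hq0 : (∫ t in (0:ℝ)..T, q t) = 0)
    (μ : ℝ)
    (hμ : μ = (∫ t in (0:ℝ)..T, Real.exp (-2 * ∫ s in (0:ℝ)..t, q s))⁻¹ *
      ∫ t in (0:ℝ)..T, Real.exp (-2 * ∫ s in (0:ℝ)..t, q s) * (q t ^ 2 - γ t)) :
    -- at most one T-periodic solution
    (∀ φ ψ : ℝ → ℝ,
      (∀ t, HasDerivAt φ (φ t ^ 2 + γ t + μ) t) → Function.Periodic φ T →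
      (∀ t, HasDerivAt ψ (ψ t ^ 2 + γ t + μ) t) → Function.Periodic ψ T → φ = ψ) ∧
    -- any T-periodic solution equals q, and in particular has zero average
    (∀ φ : ℝ → ℝ,
      (∀ t, HasDerivAt φ (φ t ^ 2 + γ t + μ) t) → Function.Periodic φ T →
      φ = q ∧ (∫ t in (0:ℝ)..T, φ t) = 0) := by
  suffices key : ∀ φ : ℝ → ℝ,
      (∀ t, HasDerivAt φ (φ t ^ 2 + γ t + μ) t) → Function.Periodic φ T → φ = q by
    refine ⟨fun φ ψ hφ hφp hψ hψp => ?_, fun φ hφ hφp => ⟨key φ hφ hφp, ?_⟩⟩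
    · rw [key φ hφ hφp, key ψ hψ hψp]
    · rw [key φ hφ hφp]; exact hq0
  intro φ hφ hφp
  have hqc : Continuous q := hq.continuous
  have hq' : ∀ t, HasDerivAt q (deriv q t) t := fun t =>
    ((hq.differentiable one_ne_zero) t).hasDerivAt
  have hq'c : Continuous (deriv q) := hq.continuous_deriv le_rfl
  have hφd : Differentiable ℝ φ := fun t => (hφ t).differentiableAt
  have hφc : Continuous φ := hφd.continuous
  -- primitive of q and the weight w
  set Q : ℝ → ℝ := fun u => ∫ s in (0:ℝ)..u, q s with hQdef
  have hQc : Continuous Q :=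
    intervalIntegral.continuous_primitive (fun a b => hqc.intervalIntegrable a b) 0
  have hQd : ∀ t, HasDerivAt Q (q t) t := fun t =>
    intervalIntegral.integral_hasDerivAt_right (hqc.intervalIntegrable 0 t)
      (hqc.stronglyMeasurableAtFilter _ _) hqc.continuousAt
  set w : ℝ → ℝ := fun t => Real.exp (-2 * Q t) with hwdef
  have hwc : Continuous w := Real.continuous_exp.comp (continuous_const.mul hQc)
  have hwd : ∀ t, HasDerivAt w (Real.exp (-2 * Q t) * (-2 * q t)) t := fun t =>
    ((hQd t).const_mul (-2)).exp
  have hwpos : ∀ t, 0 < w t := fun t => Real.exp_pos _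
  have hwT : w T = 1 := by simp [hwdef, hQdef, hq0]
  have hw0 : w 0 = 1 := by simp [hwdef, hQdef]
  have hφT : φ T = φ 0 := by simpa using hφp 0
  have hqT : q T = q 0 := by simpa using hqper 0
  -- derivative of g = w * (φ - q)
  have hgd : ∀ t, HasDerivAt (fun t => w t * (φ t - q t))
      (w t * ((φ t - q t) ^ 2 + (q t ^ 2 + γ t + μ - deriv q t))) t := by
    intro t
    have := (hwd t).fun_mul ((hφ t).fun_sub (hq' t))
    refine this.congr_deriv (Eq.symm ?_)
    show w t * _ = Real.exp (-2 * Q t) * (-2 * q t) * (φ t - q t) + w t * _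
    rw [hwdef]
    ring
  have hhd : ∀ t, HasDerivAt (fun t => w t * q t)
      (w t * (deriv q t - 2 * q t ^ 2)) t := by
    intro t
    have := (hwd t).fun_mul (hq' t)
    refine this.congr_deriv (Eq.symm ?_)
    show w t * _ = Real.exp (-2 * Q t) * (-2 * q t) * q t + w t * _
    rw [hwdef]
    ring
  -- FTC applications
  have hcont1 : Continuous fun t => w t * ((φ t - q t) ^ 2 + (q t ^ 2 + γ t + μ - deriv q t)) :=
    by fun_prop
  have hcont2 : Continuous fun t => w t * (deriv q t - 2 * q t ^ 2) := by fun_prop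
  have hI1 : (∫ t in (0:ℝ)..T, w t * ((φ t - q t) ^ 2 + (q t ^ 2 + γ t + μ - deriv q t))) = 0 := by
    rw [intervalIntegral.integral_eq_sub_of_hasDerivAt (fun t _ => hgd t)
      (hcont1.intervalIntegrable 0 T)]
    rw [hwT, hw0, hφT, hqT]; ring
  have hI2 : (∫ t in (0:ℝ)..T, w t * (deriv q t - 2 * q t ^ 2)) = 0 := by
    rw [intervalIntegral.integral_eq_sub_of_hasDerivAt (fun t _ => hhd t)
      (hcont2.intervalIntegrable 0 T)]
    rw [hwT, hw0, hqT]; ring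
  -- the choice of μ
  have hWpos : 0 < ∫ t in (0:ℝ)..T, w t :=
    intervalIntegral.intervalIntegral_pos_of_pos (hwc.intervalIntegrable 0 T) hwpos hT
  have hμ' : (∫ t in (0:ℝ)..T, w t * (q t ^ 2 - γ t)) = μ * ∫ t in (0:ℝ)..T, w t := by
    have hIfold : (∫ t in (0:ℝ)..T, Real.exp (-2 * ∫ s in (0:ℝ)..t, q s) * (q t ^ 2 - γ t))
        = ∫ t in (0:ℝ)..T, w t * (q t ^ 2 - γ t) := rfl
    rw [hμ, hIfold, mul_comm ((∫ t in (0:ℝ)..T, w t)⁻¹) _, mul_assoc,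
      inv_mul_cancel₀ hWpos.ne', mul_one]
  -- splitting the integrals
  have hintg : ∀ f : ℝ → ℝ, Continuous f → IntervalIntegrable f volume 0 T :=
    fun f hf => hf.intervalIntegrable 0 T
  have hA : (∫ t in (0:ℝ)..T, w t * (φ t - q t) ^ 2) = 0 := by
    have hsplit : (∫ t in (0:ℝ)..T, w t * ((φ t - q t) ^ 2 + (q t ^ 2 + γ t + μ - deriv q t)))
        = (∫ t in (0:ℝ)..T, w t * (φ t - q t) ^ 2)
          + ∫ t in (0:ℝ)..T, w t * (q t ^ 2 + γ t + μ - deriv q t) := by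
      rw [← intervalIntegral.integral_add (hintg _ (by fun_prop)) (hintg _ (by fun_prop))]
      apply intervalIntegral.integral_congr
      intro t _; ring
    have hD : (∫ t in (0:ℝ)..T, w t * (γ t + μ - q t ^ 2)) = 0 := by
      have e1 : (∫ t in (0:ℝ)..T, w t * (γ t + μ - q t ^ 2))
          = (∫ t in (0:ℝ)..T, μ * w t) - ∫ t in (0:ℝ)..T, w t * (q t ^ 2 - γ t) := by
        rw [← intervalIntegral.integral_sub (hintg _ (by fun_prop)) (hintg _ (by fun_prop))]
        apply intervalIntegral.integral_congr
        intro t _; ring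
      rw [e1, intervalIntegral.integral_const_mul, hμ']
      ring
    have hBCD : (∫ t in (0:ℝ)..T, w t * (q t ^ 2 + γ t + μ - deriv q t))
        + (∫ t in (0:ℝ)..T, w t * (deriv q t - 2 * q t ^ 2))
        = ∫ t in (0:ℝ)..T, w t * (γ t + μ - q t ^ 2) := by
      rw [← intervalIntegral.integral_add (hintg _ (by fun_prop)) (hintg _ (by fun_prop))]
      apply intervalIntegral.integral_congr
      intro t _; ring
    rw [hI2] at hBCD
    rw [hD] at hBCD
    rw [hsplit] at hI1
    linarith
  -- conclude pointwise vanishing on [0, T]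
  have hzero : ∀ t ∈ Set.Icc (0:ℝ) T, φ t = q t := by
    intro t ht
    have h0 := aux_zero_on_Icc hT (by fun_prop : Continuous fun t => w t * (φ t - q t) ^ 2)
      (fun t => mul_nonneg (hwpos t).le (sq_nonneg _)) hA t ht
    have : (φ t - q t) ^ 2 = 0 := by
      rcases mul_eq_zero.1 h0 with h | h
      · exact absurd h (hwpos t).ne'
      · exact h
    have h2 := sq_eq_zero_iff.1 this
    linarith
  -- extend by periodicity
  funext t
  have hvper : Function.Periodic (fun t => φ t - q t) T := fun x => by
    simp [hφp x, hqper x]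
  obtain ⟨y, hy, hvy⟩ := hvper.exists_mem_Ico₀ hT t
  have : φ y = q y := hzero y ⟨hy.1, hy.2.le⟩
  have := hvy.trans (by simp [this] : φ y - q y = 0)
  linarith [sub_eq_zero.1 this]
end

section
/- Let γ: ℝ → ℝ be a continuous T-periodic function with zero average, let q ∈ C¹_{T,0}(ℝ), and set μ := (∫₀ᵀ e^{−2∫₀ᵗ q(s) ds} dt)⁻¹ · ∫₀ᵀ e^{−2∫₀ᵗ q(s) ds} (q(t)² − γ(t)) dt. Then every solution of the linear differential equation y' = 2q(t)y + γ(t) + μ − q(t)² is T-periodic; that is, the general solution y(t,y₀) = e^{2∫₀ᵗ q(s) ds}( y₀ + μ∫₀ᵗ e^{−2∫₀ˢ q(r) dr} ds + ∫₀ᵗ e^{−2∫₀ˢ q(r) dr}(γ(s) − q(s)²) ds ) satisfies y(T, y₀) = y₀ for every y₀ ∈ ℝ. -/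
theorem stmt_10 (T : ℝ) (hT : 0 < T) (γ : ℝ → ℝ) (hγc : Continuous γ)
    (hγp : Function.Periodic γ T) (hγ0 : (∫ t in (0:ℝ)..T, γ t) = 0)
    (q : ℝ → ℝ) (hq : ContDiff ℝ 1 q) (hqper : Function.Periodic q T)
    (hq0 : (∫ t in (0:ℝ)..T, q t) = 0)
    (μ : ℝ)
    (hμ : μ = (∫ t in (0:ℝ)..T, Real.exp (-2 * ∫ s in (0:ℝ)..t, q s))⁻¹ *
      ∫ t in (0:ℝ)..T, Real.exp (-2 * ∫ s in (0:ℝ)..t, q s) * (q t ^ 2 - γ t)) :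
    -- every solution of the linear equation y' = 2q(t)y + γ(t) + μ − q(t)² is T-periodic
    (∀ y : ℝ → ℝ, (∀ t, HasDerivAt y (2 * q t * y t + γ t + μ - q t ^ 2) t) →
      Function.Periodic y T) ∧
    -- that is, the general solution satisfies y(T, y₀) = y₀ for every y₀
    (∀ y₀ : ℝ,
      Real.exp (2 * ∫ s in (0:ℝ)..T, q s) *
        (y₀ + μ * (∫ s in (0:ℝ)..T, Real.exp (-2 * ∫ r in (0:ℝ)..s, q r)) +
          ∫ s in (0:ℝ)..T, Real.exp (-2 * ∫ r in (0:ℝ)..s, q r) * (γ s - q s ^ 2)) = y₀) := by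
  have hqc : Continuous q := hq.continuous
  set Q : ℝ → ℝ := fun u => ∫ s in (0:ℝ)..u, q s with hQdef
  have hQ : ∀ t : ℝ, HasDerivAt Q (q t) t := fun t =>
    intervalIntegral.integral_hasDerivAt_right (hqc.intervalIntegrable 0 t)
      (hqc.stronglyMeasurableAtFilter _ _) hqc.continuousAt
  have hQc : Continuous Q := by
    rw [continuous_iff_continuousAt]; exact fun t => (hQ t).continuousAt
  set E : ℝ → ℝ := fun u => Real.exp (-2 * Q u) with hEdef
  have hEc : Continuous E := (continuous_const.mul hQc).rexp
  have hE : ∀ t : ℝ, HasDerivAt E (E t * (-2 * q t)) t := fun t =>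
    (((hQ t).const_mul (-2)).exp)
  have hEpos : ∀ t, 0 < E t := fun t => Real.exp_pos _
  have hQ0 : Q 0 = 0 := intervalIntegral.integral_same
  have hQT : Q T = 0 := hq0
  have hE0 : E 0 = 1 := by simp [hEdef, hQ0]
  have hET : E T = 1 := by simp [hEdef, hQT]
  -- basic integrals
  set I : ℝ := ∫ t in (0:ℝ)..T, E t with hIdef
  set K : ℝ := ∫ t in (0:ℝ)..T, E t * (q t ^ 2 - γ t) with hKdef
  have hIpos : 0 < I := by
    apply intervalIntegral.intervalIntegral_pos_of_pos_on
      (hEc.intervalIntegrable 0 T) (fun x _ => hEpos x) hT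
  have hμ' : μ * I = K := by
    rw [hμ, inv_mul_eq_div, div_mul_cancel₀ _ hIpos.ne']
  have hJ : (∫ s in (0:ℝ)..T, E s * (γ s - q s ^ 2)) = -K := by
    rw [hKdef, ← intervalIntegral.integral_neg]
    congr 1; ext s; ring
  -- key: ∫₀ᵀ E (γ + μ - q²) = 0
  have hint1 : IntervalIntegrable (fun s => E s * (γ s - q s ^ 2)) MeasureTheory.volume 0 T :=
    (hEc.mul (hγc.sub (hqc.pow 2))).intervalIntegrable 0 T
  have hint2 : IntervalIntegrable (fun s => μ * E s) MeasureTheory.volume 0 T :=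
    (continuous_const.mul hEc).intervalIntegrable 0 T
  have key : (∫ t in (0:ℝ)..T, E t * (γ t + μ - q t ^ 2)) = 0 := by
    have : (fun t => E t * (γ t + μ - q t ^ 2)) =
        fun t => E t * (γ t - q t ^ 2) + μ * E t := by
      ext t; ring
    rw [this, intervalIntegral.integral_add hint1 hint2, hJ,
      intervalIntegral.integral_const_mul]
    rw [← hIdef]
    linarith [hμ']
  constructor
  · -- every solution is periodic
    intro y hy
    have hyc : Continuous y := by
      rw [continuous_iff_continuousAt]; exact fun t => (hy t).continuousAt
    -- F = E * y, F' = E (γ + μ - q²)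
    have hF : ∀ t : ℝ, HasDerivAt (fun u => E u * y u) (E t * (γ t + μ - q t ^ 2)) t := by
      intro t
      have : HasDerivAt (fun u => E u * y u) _ t := (hE t).mul (hy t)
      convert this using 1
      ring
    have hFint : IntervalIntegrable (fun t => E t * (γ t + μ - q t ^ 2))
        MeasureTheory.volume 0 T :=
      (hEc.mul ((hγc.add continuous_const).sub (hqc.pow 2))).intervalIntegrable 0 T
    have hFTC : (∫ t in (0:ℝ)..T, E t * (γ t + μ - q t ^ 2)) = E T * y T - E 0 * y 0 :=
      intervalIntegral.integral_eq_sub_of_hasDerivAt (fun t _ => hF t) hFint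
    have hyT : y T = y 0 := by
      rw [key, hET, hE0] at hFTC
      linarith
    -- w t = y (t+T) - y t satisfies w' = 2 q w, w 0 = 0, so E*w constant = 0
    set G : ℝ → ℝ := fun t => E t * (y (t + T) - y t) with hGdef
    have hG : ∀ t : ℝ, HasDerivAt G 0 t := by
      intro t
      have h1 : HasDerivAt (fun u => y (u + T))
          (2 * q t * y (t + T) + γ t + μ - q t ^ 2) t := by
        have : HasDerivAt (fun u => y (u + T)) _ t := (hy (t + T)).comp t ((hasDerivAt_id t).add_const T)
        simpa [hqper t, hγp t] using this
      have h2 : HasDerivAt G _ t := (hE t).mul (h1.sub (hy t))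
      convert h2 using 1
      ring
    have hGconst : ∀ t : ℝ, G t = G 0 := by
      intro t
      have : ∀ x, deriv G x = 0 := fun x => (hG x).deriv
      exact is_const_of_deriv_eq_zero (fun x => (hG x).differentiableAt) this t 0
    intro t
    have h0 : G 0 = 0 := by simp [hGdef, hE0, hyT]
    have h := (hGconst t).trans h0
    have hEne : E t ≠ 0 := (hEpos t).ne'
    have := (mul_eq_zero.mp h).resolve_left hEne
    linarith
  · -- explicit solution
    intro y₀
    rw [hq0]
    simp only [mul_zero, Real.exp_zero, one_mul]
    have : (∫ s in (0:ℝ)..T, Real.exp (-2 * ∫ r in (0:ℝ)..s, q r) * (γ s - q s ^ 2)) = -K :=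
      hJ
    rw [this]
    linarith [hμ']
end

section
/- Let γ: ℝ → ℝ be a continuous T-periodic function with zero average and let φ be a continuously differentiable T-periodic function with zero average satisfying φ'(t) = φ(t)² + γ(t) + μ for all t and some μ ∈ ℝ. Then ∫₀ᵀ e^{−2∫₀ᵗ φ(s) ds} ( φ(t)² − γ(t) − μ ) dt = 0; equivalently, μ = (∫₀ᵀ e^{−2∫₀ᵗ φ(s) ds} dt)⁻¹ · ∫₀ᵀ e^{−2∫₀ᵗ φ(s) ds} (φ(t)² − γ(t)) dt. In particular, ∫₀ᵀ e^{−2∫₀ᵗ φ(s) ds} φ'(t) dt = 2∫₀ᵀ e^{−2∫₀ᵗ φ(s) ds} φ(t)² dt. -/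
theorem stmt_11 (T : ℝ) (hT : 0 < T) (γ : ℝ → ℝ) (hγc : Continuous γ)
    (hγp : Function.Periodic γ T) (hγ0 : (∫ t in (0:ℝ)..T, γ t) = 0)
    (μ : ℝ) (φ : ℝ → ℝ)
    (hφd : ∀ t, HasDerivAt φ (φ t ^ 2 + γ t + μ) t)
    (hφp : Function.Periodic φ T)
    (hφ0 : (∫ t in (0:ℝ)..T, φ t) = 0) :
    (∫ t in (0:ℝ)..T, Real.exp (-2 * ∫ s in (0:ℝ)..t, φ s) * (φ t ^ 2 - γ t - μ)) = 0 ∧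
    μ = (∫ t in (0:ℝ)..T, Real.exp (-2 * ∫ s in (0:ℝ)..t, φ s))⁻¹ *
      ∫ t in (0:ℝ)..T, Real.exp (-2 * ∫ s in (0:ℝ)..t, φ s) * (φ t ^ 2 - γ t) ∧
    (∫ t in (0:ℝ)..T, Real.exp (-2 * ∫ s in (0:ℝ)..t, φ s) * deriv φ t) =
      2 * ∫ t in (0:ℝ)..T, Real.exp (-2 * ∫ s in (0:ℝ)..t, φ s) * φ t ^ 2 := by
  have hφc : Continuous φ := by
    rw [continuous_iff_continuousAt]; exact fun t => (hφd t).continuousAt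
  set g : ℝ → ℝ := fun t => ∫ s in (0:ℝ)..t, φ s with hgdef
  have hg : ∀ t, HasDerivAt g (φ t) t := by
    intro t
    exact intervalIntegral.integral_hasDerivAt_right (hφc.intervalIntegrable 0 t)
      (hφc.stronglyMeasurableAtFilter _ _) hφc.continuousAt
  have hgc : Continuous g := by
    rw [continuous_iff_continuousAt]; exact fun t => (hg t).continuousAt
  set F : ℝ → ℝ := fun t => Real.exp (-2 * g t) with hFdef
  have hFc : Continuous F := (continuous_const.mul hgc).rexp
  have hF : ∀ t, HasDerivAt F (F t * (-2 * φ t)) t := fun t => ((hg t).const_mul (-2)).exp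
  have hg0 : g 0 = 0 := intervalIntegral.integral_same
  have hgT : g T = 0 := hφ0
  have hF0 : F 0 = 1 := by simp [hFdef, hg0]
  have hFT : F T = 1 := by simp [hFdef, hgT]
  -- key integral identity
  have hh : ∀ t ∈ Set.uIcc (0:ℝ) T, HasDerivAt (fun t => F t * φ t)
      (F t * (γ t + μ - φ t ^ 2)) t := by
    intro t _
    have : HasDerivAt (fun t => F t * φ t) (F t * (-2 * φ t) * φ t + F t * (φ t ^ 2 + γ t + μ)) t :=
      (hF t).mul (hφd t)
    convert this using 1
    ring
  have hic : Continuous fun t => F t * (γ t + μ - φ t ^ 2) :=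
    hFc.mul ((hγc.add continuous_const).sub (hφc.pow 2))
  have key : (∫ t in (0:ℝ)..T, F t * (γ t + μ - φ t ^ 2)) = 0 := by
    rw [intervalIntegral.integral_eq_sub_of_hasDerivAt hh (hic.intervalIntegrable 0 T)]
    simp [hF0, hFT, show φ T = φ 0 by simpa using hφp 0]
  have h1 : (∫ t in (0:ℝ)..T, F t * (φ t ^ 2 - γ t - μ)) = 0 := by
    have : (∫ t in (0:ℝ)..T, F t * (φ t ^ 2 - γ t - μ))
        = -∫ t in (0:ℝ)..T, F t * (γ t + μ - φ t ^ 2) := by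
      rw [← intervalIntegral.integral_neg]
      congr 1; ext t; ring
    rw [this, key, neg_zero]
  have hFpos : 0 < ∫ t in (0:ℝ)..T, F t := by
    apply intervalIntegral.intervalIntegral_pos_of_pos (hFc.intervalIntegrable 0 T)
      (fun t => Real.exp_pos _) hT
  have hi1 : IntervalIntegrable (fun t => F t * (φ t ^ 2 - γ t - μ)) MeasureTheory.volume 0 T :=
    (hFc.mul (((hφc.pow 2).sub hγc).sub continuous_const)).intervalIntegrable 0 T
  have hiF : IntervalIntegrable F MeasureTheory.volume 0 T := hFc.intervalIntegrable 0 T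
  have h2 : (∫ t in (0:ℝ)..T, F t * (φ t ^ 2 - γ t)) = μ * ∫ t in (0:ℝ)..T, F t := by
    have : (∫ t in (0:ℝ)..T, F t * (φ t ^ 2 - γ t))
        = (∫ t in (0:ℝ)..T, (F t * (φ t ^ 2 - γ t - μ) + μ * F t)) := by
      congr 1; ext t; ring
    rw [this, intervalIntegral.integral_add hi1 (hiF.const_mul μ), h1, zero_add,
      intervalIntegral.integral_const_mul]
  refine ⟨h1, ?_, ?_⟩
  · rw [h2, mul_comm μ, ← mul_assoc, inv_mul_cancel₀ (ne_of_gt hFpos), one_mul]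
  · have hd : ∀ t, deriv φ t = φ t ^ 2 + γ t + μ := fun t => (hφd t).deriv
    have : (∫ t in (0:ℝ)..T, F t * deriv φ t)
        = ∫ t in (0:ℝ)..T, (2 * (F t * φ t ^ 2) - F t * (φ t ^ 2 - γ t - μ)) := by
      congr 1; ext t; rw [hd t]; ring
    rw [this, intervalIntegral.integral_sub (f := fun t => 2 * (F t * φ t ^ 2)) (((hFc.mul (hφc.pow 2)).intervalIntegrable 0 T).const_mul 2) hi1,
      h1, sub_zero, intervalIntegral.integral_const_mul]
end

section
/- Let T > 0, let α: ℝ → ℝ be a continuous T-periodic function with zero average, and let (αₙ) be continuous T-periodic functions with zero average converging uniformly to α. Suppose for each n there exist μₙ ∈ ℝ and a continuously differentiable T-periodic function pₙ with zero average such that pₙ'(t) = pₙ(t)² + αₙ(t) + μₙ for all t, and suppose pₙ converges uniformly to a function p*. Then: μₙ = −(1/T)∫₀ᵀ pₙ(t)² dt for every n; μₙ converges to μ̃ := −(1/T)∫₀ᵀ p*(t)² dt; p* is continuously differentiable, T-periodic, has zero average, and satisfies p*'(t) = p*(t)² + α(t) + μ̃ for all t. -/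
set_option maxHeartbeats 1000000


theorem stmt_16 (T : ℝ) (hT : 0 < T)
    (α : ℝ → ℝ) (hαc : Continuous α) (hαp : Function.Periodic α T)
    (hα0 : (∫ t in (0:ℝ)..T, α t) = 0)
    (αn : ℕ → ℝ → ℝ) (hαnc : ∀ n, Continuous (αn n))
    (hαnp : ∀ n, Function.Periodic (αn n) T)
    (hαn0 : ∀ n, (∫ t in (0:ℝ)..T, αn n t) = 0)
    (hαconv : TendstoUniformly αn α Filter.atTop)
    (μn : ℕ → ℝ) (pn : ℕ → ℝ → ℝ)
    (hpnd : ∀ n t, HasDerivAt (pn n) (pn n t ^ 2 + αn n t + μn n) t)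
    (hpnp : ∀ n, Function.Periodic (pn n) T)
    (hpn0 : ∀ n, (∫ t in (0:ℝ)..T, pn n t) = 0)
    (ps : ℝ → ℝ) (hpconv : TendstoUniformly pn ps Filter.atTop) :
    -- μₙ = −(1/T)∫₀ᵀ pₙ²
    (∀ n, μn n = -(1 / T) * ∫ t in (0:ℝ)..T, pn n t ^ 2) ∧
    -- μₙ → μ̃ = −(1/T)∫₀ᵀ (p*)²
    Filter.Tendsto μn Filter.atTop (nhds (-(1 / T) * ∫ t in (0:ℝ)..T, ps t ^ 2)) ∧
    -- p* is continuously differentiable, T-periodic, has zero average,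
    -- and solves x' = x² + α(t) + μ̃
    ContDiff ℝ 1 ps ∧ Function.Periodic ps T ∧ (∫ t in (0:ℝ)..T, ps t) = 0 ∧
    (∀ t, HasDerivAt ps (ps t ^ 2 + α t + (-(1 / T) * ∫ s in (0:ℝ)..T, ps s ^ 2)) t) := by
  have hTne : T ≠ 0 := ne_of_gt hT
  have hpnc : ∀ n, Continuous (pn n) :=
    fun n => continuous_iff_continuousAt.2 fun t => (hpnd n t).continuousAt
  have hpsc : Continuous ps := hpconv.continuous (Filter.Eventually.of_forall hpnc).frequently
  -- ps is periodic
  have hpsp : Function.Periodic ps T := by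
    intro t
    have h1 := hpconv.tendsto_at (t + T)
    have h2 := hpconv.tendsto_at t
    have heq : (fun n => pn n (t + T)) = fun n => pn n t := funext fun n => hpnp n t
    rw [heq] at h1
    exact tendsto_nhds_unique h1 h2
  -- Part 1 : formula for μn
  have h1 : ∀ n, μn n = -(1 / T) * ∫ t in (0:ℝ)..T, pn n t ^ 2 := by
    intro n
    have hi1 : IntervalIntegrable (fun t => pn n t ^ 2) MeasureTheory.volume 0 T :=
      ((hpnc n).pow 2).intervalIntegrable 0 T
    have hi2 : IntervalIntegrable (αn n) MeasureTheory.volume 0 T :=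
      (hαnc n).intervalIntegrable 0 T
    have hi3 : IntervalIntegrable (fun _ : ℝ => μn n) MeasureTheory.volume 0 T :=
      intervalIntegrable_const
    have hcont : Continuous (fun t => pn n t ^ 2 + αn n t + μn n) :=
      (((hpnc n).pow 2).add (hαnc n)).add continuous_const
    have hii : IntervalIntegrable (fun t => pn n t ^ 2 + αn n t + μn n)
        MeasureTheory.volume 0 T := hcont.intervalIntegrable 0 T
    have hint : (∫ t in (0:ℝ)..T, (pn n t ^ 2 + αn n t + μn n)) = pn n T - pn n 0 :=
      intervalIntegral.integral_eq_sub_of_hasDerivAt (fun t _ => hpnd n t) hii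
    have hpT : pn n T = pn n 0 := by simpa using hpnp n 0
    rw [intervalIntegral.integral_add ((hi1.add hi2)) hi3,
      intervalIntegral.integral_add hi1 hi2, hαn0 n, intervalIntegral.integral_const,
      hpT] at hint
    have hint' : (∫ t in (0:ℝ)..T, pn n t ^ 2) + T * μn n = 0 := by
      have := hint
      simp only [smul_eq_mul, sub_zero] at this ⊢
      linarith
    field_simp
    linarith
  -- convergence of interval integrals under uniform convergence
  have hInt : ∀ (fn : ℕ → ℝ → ℝ) (f : ℝ → ℝ), (∀ n, Continuous (fn n)) → Continuous f →
      TendstoUniformly fn f Filter.atTop →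
      Filter.Tendsto (fun n => ∫ t in (0:ℝ)..T, fn n t) Filter.atTop
        (nhds (∫ t in (0:ℝ)..T, f t)) := by
    intro fn f hc hfc hu
    rw [Metric.tendsto_atTop]
    intro ε hε
    rw [Metric.tendstoUniformly_iff] at hu
    obtain ⟨N, hN⟩ := Filter.eventually_atTop.mp (hu (ε / (2 * T)) (by positivity))
    refine ⟨N, fun n hn => ?_⟩
    have key : ‖(∫ t in (0:ℝ)..T, fn n t) - ∫ t in (0:ℝ)..T, f t‖ ≤ ε / (2 * T) * |T - 0| := by
      rw [← intervalIntegral.integral_sub]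
      · refine intervalIntegral.norm_integral_le_of_norm_le_const fun x _ => ?_
        have := hN n hn x
        rw [Real.dist_eq] at this
        rw [Real.norm_eq_abs, abs_sub_comm]
        exact le_of_lt this
      · exact (hc n).intervalIntegrable 0 T
      · exact hfc.intervalIntegrable 0 T
    rw [Real.dist_eq]
    calc |(∫ t in (0:ℝ)..T, fn n t) - ∫ t in (0:ℝ)..T, f t| ≤ ε / (2 * T) * |T - 0| := key
      _ = ε / 2 := by rw [sub_zero, abs_of_pos hT]; field_simp
      _ < ε := by linarith
  -- a bound for ps
  obtain ⟨C, hC0, hC⟩ : ∃ C, 0 ≤ C ∧ ∀ t, |ps t| ≤ C := by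
    obtain ⟨C, hC⟩ :=
      (isCompact_Icc (a := (0:ℝ)) (b := T)).exists_bound_of_continuousOn hpsc.continuousOn
    refine ⟨max C 0, le_max_right _ _, fun t => ?_⟩
    obtain ⟨y, hy, hyt⟩ := hpsp.exists_mem_Ico₀ hT t
    rw [hyt, ← Real.norm_eq_abs]
    exact le_trans (hC y (Set.Ico_subset_Icc_self hy)) (le_max_left _ _)
  -- uniform convergence of squares
  have hsq : TendstoUniformly (fun n t => pn n t ^ 2) (fun t => ps t ^ 2) Filter.atTop := by
    rw [Metric.tendstoUniformly_iff]
    intro ε hε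
    rw [Metric.tendstoUniformly_iff] at hpconv
    have hδ : (0:ℝ) < min 1 (ε / (2 * C + 2)) := lt_min one_pos (by positivity)
    filter_upwards [hpconv _ hδ] with n hn t
    have h1 : dist (ps t) (pn n t) < min 1 (ε / (2 * C + 2)) := hn t
    rw [Real.dist_eq] at h1
    rw [Real.dist_eq]
    have hd1 : |ps t - pn n t| < 1 := lt_of_lt_of_le h1 (min_le_left _ _)
    have hd2 : |ps t - pn n t| < ε / (2 * C + 2) := lt_of_lt_of_le h1 (min_le_right _ _)
    have habs := abs_le.mp (hC t)
    have habs2 := abs_le.mp hd1.le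
    have habs3 := abs_le.mp hd2.le
    have hsum : |ps t + pn n t| ≤ 2 * C + 1 := by
      rw [abs_le]; constructor <;> nlinarith
    have key : ps t ^ 2 - pn n t ^ 2 = (ps t - pn n t) * (ps t + pn n t) := by ring
    rw [key, abs_mul]
    calc |ps t - pn n t| * |ps t + pn n t| ≤ |ps t - pn n t| * (2 * C + 2) := by
          apply mul_le_mul_of_nonneg_left _ (abs_nonneg _)
          linarith
      _ < ε / (2 * C + 2) * (2 * C + 2) := by
          apply mul_lt_mul_of_pos_right hd2; positivity
      _ = ε := div_mul_cancel₀ _ (by positivity)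
  -- convergence of μn
  have hμ : Filter.Tendsto μn Filter.atTop
      (nhds (-(1 / T) * ∫ t in (0:ℝ)..T, ps t ^ 2)) := by
    have hseq : Filter.Tendsto (fun n => ∫ t in (0:ℝ)..T, pn n t ^ 2) Filter.atTop
        (nhds (∫ t in (0:ℝ)..T, ps t ^ 2)) :=
      hInt _ _ (fun n => (hpnc n).pow 2) (hpsc.pow 2) hsq
    have : μn = fun n => -(1 / T) * ∫ t in (0:ℝ)..T, pn n t ^ 2 := funext h1
    rw [this]
    exact hseq.const_mul _
  -- zero average of ps
  have hps0 : (∫ t in (0:ℝ)..T, ps t) = 0 := by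
    have hseq := hInt pn ps hpnc hpsc hpconv
    have heq : (fun n => ∫ t in (0:ℝ)..T, pn n t) = fun _ => (0:ℝ) := funext hpn0
    rw [heq] at hseq
    exact (tendsto_nhds_unique tendsto_const_nhds hseq).symm
  -- uniform convergence of the constants μn
  have hμunif : TendstoUniformly (fun n (_ : ℝ) => μn n)
      (fun _ => -(1 / T) * ∫ t in (0:ℝ)..T, ps t ^ 2) Filter.atTop := by
    rw [Metric.tendstoUniformly_iff]
    intro ε hε
    filter_upwards [Metric.tendsto_nhds.mp hμ ε hε] with n hn t
    rwa [dist_comm]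
  -- ps solves the limiting ODE
  have hder : ∀ t, HasDerivAt ps
      (ps t ^ 2 + α t + (-(1 / T) * ∫ s in (0:ℝ)..T, ps s ^ 2)) t := by
    have hud : TendstoUniformly (fun n t => pn n t ^ 2 + αn n t + μn n)
        (fun t => ps t ^ 2 + α t + (-(1 / T) * ∫ s in (0:ℝ)..T, ps s ^ 2))
        Filter.atTop := (hsq.add hαconv).add hμunif
    exact hasDerivAt_of_tendstoUniformly hud
      (Filter.Eventually.of_forall fun n t => hpnd n t)
      (fun t => hpconv.tendsto_at t)
  -- ContDiff
  have hcd : ContDiff ℝ 1 ps := by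
    rw [contDiff_one_iff_deriv]
    refine ⟨fun t => (hder t).differentiableAt, ?_⟩
    have : deriv ps = fun t =>
        ps t ^ 2 + α t + (-(1 / T) * ∫ s in (0:ℝ)..T, ps s ^ 2) :=
      funext fun t => (hder t).deriv
    rw [this]
    exact ((hpsc.pow 2).add hαc).add continuous_const
  exact ⟨h1, hμ, hcd, hpsp, hps0, hder⟩
end

section
/- Let v: ℝ → ℝ be a continuously differentiable T-periodic function and consider the Riccati equation x' = (v(t) − v'(t))x² − x. Then: (i) x ≡ 0 is a T-periodic solution and ∫₀ᵀ (2(v(t) − v'(t))·0 − 1) dt = −T < 0, so it is hyperbolic and attractive; (ii) if v(t) ≠ 0 for all t ∈ ℝ, then φ(t) := 1/v(t) is a T-periodic solution and ∫₀ᵀ (2(v(t) − v'(t))φ(t) − 1) dt = T > 0, so it is hyperbolic and repulsive; (iii) for every k ∈ ℝ and every t in an interval on which v(t) + k·eᵗ ≠ 0, the function x(t) = 1/(v(t) + k·eᵗ) satisfies x'(t) = (v(t) − v'(t))x(t)² − x(t); (iv) if v(t₀) = 0 for some t₀ ∈ ℝ, then there exists t₁ ∈ ℝ with v(t₁) − v'(t₁)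 = 0, i.e., the leading coefficient of the equation vanishes somewhere. -/
theorem stmt_19 (T : ℝ) (hT : 0 < T) (v : ℝ → ℝ) (hv : ContDiff ℝ 1 v)
    (hvp : Function.Periodic v T) :
    -- (i) x ≡ 0 is a T-periodic solution, hyperbolic and attractive
    ((∀ t, HasDerivAt (fun _ : ℝ => (0:ℝ)) ((v t - deriv v t) * 0 ^ 2 - 0) t) ∧
      Function.Periodic (fun _ : ℝ => (0:ℝ)) T ∧
      (∫ t in (0:ℝ)..T, (2 * (v t - deriv v t) * 0 - 1)) = -T ∧ -T < 0) ∧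
    -- (ii) if v never vanishes, φ = 1/v is a T-periodic solution, hyperbolic and repulsive
    ((∀ t, v t ≠ 0) →
      (∀ t, HasDerivAt (fun s => 1 / v s) ((v t - deriv v t) * (1 / v t) ^ 2 - 1 / v t) t) ∧
      Function.Periodic (fun s => 1 / v s) T ∧
      (∫ t in (0:ℝ)..T, (2 * (v t - deriv v t) * (1 / v t) - 1)) = T ∧ 0 < T) ∧
    -- (iii) x = 1/(v + k eᵗ) solves the equation wherever v + k eᵗ ≠ 0
    (∀ k t : ℝ, v t + k * Real.exp t ≠ 0 →
      HasDerivAt (fun s => 1 / (v s + k * Real.exp s))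
        ((v t - deriv v t) * (1 / (v t + k * Real.exp t)) ^ 2 -
          1 / (v t + k * Real.exp t)) t) ∧
    -- (iv) if v vanishes somewhere, then so does the leading coefficient v − v'
    (∀ t₀ : ℝ, v t₀ = 0 → ∃ t₁ : ℝ, v t₁ - deriv v t₁ = 0) := by
  have hvd : ∀ t, HasDerivAt v (deriv v t) t := fun t =>
    ((hv.differentiable one_ne_zero) t).hasDerivAt
  have hvc : Continuous v := hv.continuous
  have hv'c : Continuous (deriv v) := hv.continuous_deriv le_rfl
  refine ⟨⟨?_, ?_, ?_, by linarith⟩, ?_, ?_, ?_⟩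
  · intro t
    simpa using hasDerivAt_const t (0:ℝ)
  · intro t; rfl
  · simp [intervalIntegral.integral_const]
  · -- (ii)
    intro hne
    refine ⟨?_, ?_, ?_, hT⟩
    · intro t
      have h2 : HasDerivAt (fun s => 1 / v s)
          ((0 * v t - 1 * deriv v t) / v t ^ 2) t := by
        simpa using ((hasDerivAt_const t (1:ℝ)).fun_div (hvd t) (hne t))
      have h0 : v t ≠ 0 := hne t
      convert h2 using 1
      field_simp
      ring
    · intro t; simp [hvp t]
    · have key : ∀ t : ℝ, HasDerivAt (fun s => s - 2 * Real.log (v s))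
          (2 * (v t - deriv v t) * (1 / v t) - 1) t := by
        intro t
        have hlog : HasDerivAt (fun s => Real.log (v s)) ((v t)⁻¹ * deriv v t) t :=
          (Real.hasDerivAt_log (hne t)).comp t (hvd t)
        have := (hasDerivAt_id t).fun_sub (hlog.const_mul 2)
        have h0 : v t ≠ 0 := hne t
        refine this.congr_deriv ?_
        field_simp
        ring
      have hcont : Continuous (fun t => 2 * (v t - deriv v t) * (1 / v t) - 1) := by
        exact (((continuous_const.mul (hvc.sub hv'c)).mul
          (continuous_const.div hvc hne)).sub continuous_const)
      have := intervalIntegral.integral_eq_sub_of_hasDerivAt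
        (fun t _ => key t) (hcont.intervalIntegrable 0 T)
      rw [this]
      have : v T = v 0 := by simpa using hvp 0
      simp [this]
  · -- (iii)
    intro k t hne
    have hg : HasDerivAt (fun s => v s + k * Real.exp s)
        (deriv v t + k * Real.exp t) t :=
      (hvd t).add ((Real.hasDerivAt_exp t).const_mul k)
    have h2 : HasDerivAt (fun s => 1 / (v s + k * Real.exp s))
        ((0 * (v t + k * Real.exp t) - 1 * (deriv v t + k * Real.exp t)) /
          (v t + k * Real.exp t) ^ 2) t := by
      simpa using ((hasDerivAt_const t (1:ℝ)).fun_div hg hne)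
    convert h2 using 1
    field_simp
    ring
  · -- (iv)
    intro t₀ ht₀
    set g : ℝ → ℝ := fun s => Real.exp (-s) * v s with hg
    have hgd : ∀ s, HasDerivAt g (Real.exp (-s) * (deriv v s - v s)) s := by
      intro s
      have he : HasDerivAt (fun s : ℝ => Real.exp (-s)) (-Real.exp (-s)) s := by
        simpa [Function.comp_def] using ((Real.hasDerivAt_exp (-s)).comp s (hasDerivAt_neg s))
      have := he.fun_mul (hvd s)
      refine this.congr_deriv ?_
      ring
    have hab : t₀ < t₀ + T := by linarith
    have hfI : g t₀ = g (t₀ + T) := by simp [hg, hvp t₀, ht₀]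
    obtain ⟨c, _, hc⟩ := exists_hasDerivAt_eq_zero hab
      (fun x _ => (hgd x).continuousAt.continuousWithinAt)
      hfI (fun x _ => hgd x)
    refine ⟨c, ?_⟩
    have hexp : Real.exp (-c) ≠ 0 := Real.exp_ne_zero _
    have : deriv v c - v c = 0 := by
      rcases mul_eq_zero.mp hc with h | h
      · exact absurd h hexp
      · exact h
    linarith
end
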